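/- arXiv:0909.0523 — 6 statements merged into one kernel-verified Lean document; each statement's English description precedes it below -/
import Mathlib

section
/- Let $c_0, c_1 > 0$ and let $q_1, q_2 : [0,1] \to \mathbb{R}$ be measurable with $c_0 \le q_j(x) \le c_1$ for all $x \in [0,1]$, $j=1,2$. For each $k > 0$ and $j=1,2$, let $u_j(\cdot,k) : [0,1] \to \mathbb{R}$ be the continuous solution of the Volterra equation $u_j(x,k) = 1 + k^2 \int_0^x (x-s) q_j(s) u_j(s,k)\,ds$. Let $h : [0,1] \to \mathbb{R}$ be integrable and suppose there exist finitely many points $0 = z_0 < z_1 < \dots < z_n = 1$ such that on each subinterval $[z_{m}, z_{m+1}]$ the function $h$ is either nonnegative almost everywhere or nonpositive almost everywhere. If $\int_0^1 h(x) u_1(x,k) u_2(x,k)\,dx = 0$ for every $k > 0$, then $h(x) = 0$ for almost every $x \in [0,1]$. -/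
open MeasureTheory intervalIntegral Set

lemma volterra_integrand_integrable {c0 c1 : ℝ} {q u : ℝ → ℝ} (hc0 : 0 < c0)
    (hq_meas : Measurable q) (hq_bnd : ∀ x ∈ Icc (0:ℝ) 1, c0 ≤ q x ∧ q x ≤ c1)
    (hu_cont : ContinuousOn u (Icc (0:ℝ) 1)) (x : ℝ) :
    IntegrableOn (fun s => (x - s) * q s * u s) (Icc (0:ℝ) 1) := by
  have hc1 : 0 < c1 :=
    lt_of_lt_of_le hc0 ((hq_bnd 0 (by norm_num)).1.trans (hq_bnd 0 (by norm_num)).2)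
  obtain ⟨M, hM⟩ := isCompact_Icc.exists_bound_of_continuousOn hu_cont
  have hmeas : AEStronglyMeasurable (fun s => (x - s) * q s * u s)
      (volume.restrict (Icc (0:ℝ) 1)) :=
    (((measurable_const.sub measurable_id).mul hq_meas).aestronglyMeasurable).mul
      (hu_cont.aestronglyMeasurable measurableSet_Icc)
  have hM0 : 0 ≤ M := le_trans (norm_nonneg _) (hM 0 (by norm_num))
  refine Integrable.mono' (g := fun _ => (|x| + 1) * c1 * M)
    (integrableOn_const (by simp)) hmeas ?_
  filter_upwards [ae_restrict_mem measurableSet_Icc] with s hs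
  have h1 : |x - s| ≤ |x| + 1 := by
    calc |x - s| ≤ |x| + |s| := abs_sub _ _
    _ ≤ |x| + 1 := by
        have hs' : |s| ≤ 1 := abs_le.2 ⟨by linarith [hs.1], hs.2⟩
        linarith
  have hq := hq_bnd s hs
  have hq1 : |q s| ≤ c1 := by rw [abs_le]; constructor <;> nlinarith [hq.1, hq.2]
  have hus : |u s| ≤ M := hM s hs
  have : ‖(x - s) * q s * u s‖ = |x - s| * |q s| * |u s| := by
    simp [abs_mul]
  rw [this]
  have h2 : |x - s| * |q s| ≤ (|x| + 1) * c1 :=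
    mul_le_mul h1 hq1 (abs_nonneg _) (by positivity)
  exact mul_le_mul h2 hus (abs_nonneg _) (by positivity)

lemma volterra_intervalIntegrable {c0 c1 : ℝ} {q u : ℝ → ℝ} (hc0 : 0 < c0)
    (hq_meas : Measurable q) (hq_bnd : ∀ x ∈ Icc (0:ℝ) 1, c0 ≤ q x ∧ q x ≤ c1)
    (hu_cont : ContinuousOn u (Icc (0:ℝ) 1)) (x : ℝ) {a b : ℝ}
    (ha : a ∈ Icc (0:ℝ) 1) (hb : b ∈ Icc (0:ℝ) 1) :
    IntervalIntegrable (fun s => (x - s) * q s * u s) volume a b := by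
  have := volterra_integrand_integrable hc0 hq_meas hq_bnd hu_cont x
  exact (this.mono_set (uIcc_subset_Icc ha hb)).intervalIntegrable

lemma volterra_one_le {c0 c1 k : ℝ} {q u : ℝ → ℝ} (hc0 : 0 < c0)
    (hq_meas : Measurable q) (hq_bnd : ∀ x ∈ Icc (0:ℝ) 1, c0 ≤ q x ∧ q x ≤ c1)
    (hu_cont : ContinuousOn u (Icc (0:ℝ) 1))
    (hu : ∀ x ∈ Icc (0:ℝ) 1, u x = 1 + k ^ 2 * ∫ s in (0:ℝ)..x, (x - s) * q s * u s) :
    ∀ x ∈ Icc (0:ℝ) 1, 1 ≤ u x := by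
  have hu0 : u 0 = 1 := by
    have := hu 0 (by norm_num)
    simpa using this
  have hpos : ∀ x ∈ Icc (0:ℝ) 1, 0 < u x := by
    by_contra hcon
    push_neg at hcon
    obtain ⟨x0, hx0, hux0⟩ := hcon
    set Z := Icc (0:ℝ) 1 ∩ u ⁻¹' (Iic 0) with hZdef
    have hZc : IsClosed Z := hu_cont.preimage_isClosed_of_isClosed isClosed_Icc isClosed_Iic
    have hZne : Z.Nonempty := ⟨x0, hx0, hux0⟩
    have hZbdd : BddBelow Z := ⟨0, fun t ht => ht.1.1⟩
    have hTZ : sInf Z ∈ Z := hZc.csInf_mem hZne hZbdd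
    set T := sInf Z with hTdef
    have hT01 : T ∈ Icc (0:ℝ) 1 := hTZ.1
    have huT : u T ≤ 0 := hTZ.2
    have hlt : ∀ s, 0 ≤ s → s < T → 0 < u s := by
      intro s hs0 hsT
      by_contra hP
      push_neg at hP
      have hsZ : s ∈ Z := ⟨⟨hs0, le_trans hsT.le hT01.2⟩, hP⟩
      exact absurd (csInf_le hZbdd hsZ) (not_le.2 hsT)
    have h1T : 1 ≤ u T := by
      rw [hu T hT01]
      have hnn : 0 ≤ ∫ s in (0:ℝ)..T, (T - s) * q s * u s := by
        apply intervalIntegral.integral_nonneg hT01.1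
        intro s hs
        rcases eq_or_lt_of_le hs.2 with hsT | hsT
        · rw [hsT]; simp
        · have hq := (hq_bnd s ⟨hs.1, le_trans hs.2 hT01.2⟩).1
          have hus := hlt s hs.1 hsT
          have h1 : 0 ≤ T - s := by linarith [hs.2]
          have h2 : 0 < q s := lt_of_lt_of_le hc0 hq
          positivity
      nlinarith [sq_nonneg k]
    linarith
  intro x hx
  rw [hu x hx]
  have hnn : 0 ≤ ∫ s in (0:ℝ)..x, (x - s) * q s * u s := by
    apply intervalIntegral.integral_nonneg hx.1
    intro s hs
    have hs1 : s ∈ Icc (0:ℝ) 1 := ⟨hs.1, le_trans hs.2 hx.2⟩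
    have hq := (hq_bnd s hs1).1
    have hus := hpos s hs1
    have h1 : 0 ≤ x - s := by linarith [hs.2]
    have h2 : 0 < q s := lt_of_lt_of_le hc0 hq
    positivity
  nlinarith [sq_nonneg k]

lemma volterra_mono {c0 c1 k : ℝ} {q u : ℝ → ℝ} (hc0 : 0 < c0)
    (hq_meas : Measurable q) (hq_bnd : ∀ x ∈ Icc (0:ℝ) 1, c0 ≤ q x ∧ q x ≤ c1)
    (hu_cont : ContinuousOn u (Icc (0:ℝ) 1))
    (hu : ∀ x ∈ Icc (0:ℝ) 1, u x = 1 + k ^ 2 * ∫ s in (0:ℝ)..x, (x - s) * q s * u s) :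
    ∀ a ∈ Icc (0:ℝ) 1, ∀ b ∈ Icc (0:ℝ) 1, a ≤ b → u a ≤ u b := by
  have hone := volterra_one_le hc0 hq_meas hq_bnd hu_cont hu
  intro a ha b hb hab
  have h0 : (0:ℝ) ∈ Icc (0:ℝ) 1 := by norm_num
  have hIb0a := volterra_intervalIntegrable hc0 hq_meas hq_bnd hu_cont b h0 ha
  have hIbab := volterra_intervalIntegrable hc0 hq_meas hq_bnd hu_cont b ha hb
  have hIa0a := volterra_intervalIntegrable hc0 hq_meas hq_bnd hu_cont a h0 ha
  have hsplit : (∫ s in (0:ℝ)..b, (b - s) * q s * u s)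
      = (∫ s in (0:ℝ)..a, (b - s) * q s * u s) + ∫ s in a..b, (b - s) * q s * u s :=
    (integral_add_adjacent_intervals hIb0a hIbab).symm
  have hdiff : (∫ s in (0:ℝ)..a, (b - s) * q s * u s)
      - (∫ s in (0:ℝ)..a, (a - s) * q s * u s)
      = ∫ s in (0:ℝ)..a, (b - a) * (q s * u s) := by
    rw [← integral_sub hIb0a hIa0a]
    congr 1; funext s; ring
  have hd_nn : 0 ≤ ∫ s in (0:ℝ)..a, (b - a) * (q s * u s) := by
    apply intervalIntegral.integral_nonneg ha.1
    intro s hs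
    have hs1 : s ∈ Icc (0:ℝ) 1 := ⟨hs.1, le_trans hs.2 ha.2⟩
    have hq := (hq_bnd s hs1).1
    have hus := hone s hs1
    have hba : 0 ≤ b - a := by linarith
    have : 0 < q s := lt_of_lt_of_le hc0 hq
    positivity
  have hab_nn : 0 ≤ ∫ s in a..b, (b - s) * q s * u s := by
    apply intervalIntegral.integral_nonneg hab
    intro s hs
    have hs1 : s ∈ Icc (0:ℝ) 1 := ⟨le_trans ha.1 hs.1, le_trans hs.2 hb.2⟩
    have hq := (hq_bnd s hs1).1
    have hus := hone s hs1
    have h1 : 0 ≤ b - s := by linarith [hs.2]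
    have : 0 < q s := lt_of_lt_of_le hc0 hq
    positivity
  rw [hu a ha, hu b hb, hsplit]
  nlinarith [sq_nonneg k]

lemma volterra_growth {c0 c1 k : ℝ} {q u : ℝ → ℝ} (hc0 : 0 < c0)
    (hq_meas : Measurable q) (hq_bnd : ∀ x ∈ Icc (0:ℝ) 1, c0 ≤ q x ∧ q x ≤ c1)
    (hu_cont : ContinuousOn u (Icc (0:ℝ) 1))
    (hu : ∀ x ∈ Icc (0:ℝ) 1, u x = 1 + k ^ 2 * ∫ s in (0:ℝ)..x, (x - s) * q s * u s) :
    ∀ a ∈ Icc (0:ℝ) 1, ∀ b ∈ Icc (0:ℝ) 1, a ≤ b →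
      u a * (1 + k ^ 2 * c0 * (b - a) ^ 2 / 2) ≤ u b := by
  have hone := volterra_one_le hc0 hq_meas hq_bnd hu_cont hu
  have hmono := volterra_mono hc0 hq_meas hq_bnd hu_cont hu
  intro a ha b hb hab
  have h0 : (0:ℝ) ∈ Icc (0:ℝ) 1 := by norm_num
  have hIb0a := volterra_intervalIntegrable hc0 hq_meas hq_bnd hu_cont b h0 ha
  have hIbab := volterra_intervalIntegrable hc0 hq_meas hq_bnd hu_cont b ha hb
  have hIa0a := volterra_intervalIntegrable hc0 hq_meas hq_bnd hu_cont a h0 ha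
  have hsplit : (∫ s in (0:ℝ)..b, (b - s) * q s * u s)
      = (∫ s in (0:ℝ)..a, (b - s) * q s * u s) + ∫ s in a..b, (b - s) * q s * u s :=
    (integral_add_adjacent_intervals hIb0a hIbab).symm
  have hdiff : (∫ s in (0:ℝ)..a, (b - s) * q s * u s)
      - (∫ s in (0:ℝ)..a, (a - s) * q s * u s)
      = ∫ s in (0:ℝ)..a, (b - a) * (q s * u s) := by
    rw [← integral_sub hIb0a hIa0a]
    congr 1; funext s; ring
  have hd_nn : 0 ≤ ∫ s in (0:ℝ)..a, (b - a) * (q s * u s) := by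
    apply intervalIntegral.integral_nonneg ha.1
    intro s hs
    have hs1 : s ∈ Icc (0:ℝ) 1 := ⟨hs.1, le_trans hs.2 ha.2⟩
    have hq := (hq_bnd s hs1).1
    have hus := hone s hs1
    have hba : 0 ≤ b - a := by linarith
    have : 0 < q s := lt_of_lt_of_le hc0 hq
    positivity
  -- lower bound for the integral on [a, b]
  have hlow : (∫ s in a..b, (b - s) * (c0 * u a)) ≤ ∫ s in a..b, (b - s) * q s * u s := by
    apply intervalIntegral.integral_mono_on hab ?_ hIbab
    · intro s hs
      have hs1 : s ∈ Icc (0:ℝ) 1 := ⟨le_trans ha.1 hs.1, le_trans hs.2 hb.2⟩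
      have hq := (hq_bnd s hs1).1
      have hus : u a ≤ u s := hmono a ha s hs1 hs.1
      have hua : 1 ≤ u a := hone a ha
      have hbs : 0 ≤ b - s := by linarith [hs.2]
      have h1 : c0 * u a ≤ q s * u s := by nlinarith
      nlinarith [mul_le_mul_of_nonneg_left h1 hbs]
    · exact (Continuous.intervalIntegrable (by continuity) a b)
  have hcomp : (∫ s in a..b, (b - s) * (c0 * u a)) = (b - a) ^ 2 / 2 * (c0 * u a) := by
    rw [intervalIntegral.integral_mul_const]
    congr 1
    have h1 : (∫ s in a..b, (b - s)) = (∫ s in a..b, (b:ℝ)) - ∫ s in a..b, s :=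
      integral_sub intervalIntegrable_const intervalIntegrable_id
    rw [h1, intervalIntegral.integral_const, integral_id]
    simp only [smul_eq_mul]
    ring
  have hua : 1 ≤ u a := hone a ha
  have hd_nn' : 0 ≤ (∫ s in (0:ℝ)..a, (b - s) * q s * u s)
      - (∫ s in (0:ℝ)..a, (a - s) * q s * u s) := by rw [hdiff]; exact hd_nn
  rw [hu a ha, hu b hb, hsplit] at *
  nlinarith [sq_nonneg k, mul_le_mul_of_nonneg_left (hcomp ▸ hlow) (sq_nonneg k)]


lemma key_contra {c0 : ℝ} (hc0 : 0 < c0) (U : ℝ → ℝ → ℝ)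
    (hU_cont : ∀ k > (0:ℝ), ContinuousOn (U k) (Icc (0:ℝ) 1))
    (hU_one : ∀ k > (0:ℝ), ∀ x ∈ Icc (0:ℝ) 1, 1 ≤ U k x)
    (hU_mono : ∀ k > (0:ℝ), ∀ a ∈ Icc (0:ℝ) 1, ∀ b ∈ Icc (0:ℝ) 1, a ≤ b → U k a ≤ U k b)
    (hU_growth : ∀ k > (0:ℝ), ∀ a ∈ Icc (0:ℝ) 1, ∀ b ∈ Icc (0:ℝ) 1, a ≤ b →
      U k a * (1 + k ^ 2 * c0 * (b - a) ^ 2 / 2) ≤ U k b)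
    (h : ℝ → ℝ) (hh_int : IntegrableOn h (Icc (0:ℝ) 1))
    (m m' t : ℝ) (hm0 : 0 ≤ m) (hmm' : m < m') (hm't : m' < t) (ht1 : t ≤ 1)
    (hsign : ∀ᵐ x, x ∈ Ioc m t → 0 ≤ h x)
    (hzero : ∀ᵐ x, x ∈ Ioc t 1 → h x = 0)
    (hnz : ¬ (∀ᵐ x, x ∈ Ioc m' 1 → h x = 0))
    (horth : ∀ k > (0:ℝ), ∫ x in Set.Ioc (0:ℝ) 1, h x * U k x = 0) :
    False := by
  have hm1 : m ≤ 1 := by linarith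
  have hm'01 : m' ∈ Icc (0:ℝ) 1 := ⟨by linarith, by linarith⟩
  have hm01 : m ∈ Icc (0:ℝ) 1 := ⟨hm0, hm1⟩
  have ht01 : t ∈ Icc (0:ℝ) 1 := ⟨by linarith, ht1⟩
  -- integrability of h on subintervals
  have hInt : ∀ s ⊆ Icc (0:ℝ) 1, IntegrableOn h s := fun s hs => hh_int.mono_set hs
  have hsub1 : Ioc m' t ⊆ Icc (0:ℝ) 1 := fun x hx => ⟨by linarith [hx.1], le_trans hx.2 ht1⟩
  -- c > 0
  set c := ∫ x in Set.Ioc m' t, h x with hc_def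
  have hsign' : 0 ≤ᵐ[volume.restrict (Set.Ioc m' t)] h := by
    filter_upwards [ae_restrict_mem measurableSet_Ioc, ae_restrict_of_ae hsign] with x hx hs
    exact hs ⟨lt_trans hmm' hx.1, hx.2⟩
  have hc_nn : 0 ≤ c := MeasureTheory.integral_nonneg_of_ae hsign'
  have hc_pos : 0 < c := by
    rcases eq_or_lt_of_le hc_nn with hc0' | hc0'
    · exfalso
      have hz : h =ᵐ[volume.restrict (Set.Ioc m' t)] 0 :=
        (MeasureTheory.integral_eq_zero_iff_of_nonneg_ae hsign' (hInt _ hsub1)).1 hc0'.symm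
      have hz' : ∀ᵐ x, x ∈ Set.Ioc m' t → h x = 0 :=
        (ae_restrict_iff' measurableSet_Ioc).1 hz
      apply hnz
      filter_upwards [hz', hzero] with x h1 h2 hx
      rcases le_or_gt x t with hxt | hxt
      · exact h1 ⟨hx.1, hxt⟩
      · exact h2 ⟨hxt, hx.2⟩
    · exact hc0'
  -- total variation bound
  set H := ∫ x in Set.Icc (0:ℝ) 1, |h x| with hH_def
  have hH_nn : 0 ≤ H := integral_nonneg fun x => abs_nonneg _
  -- main inequality for each k > 0
  have main : ∀ k > (0:ℝ), c * (1 + k ^ 2 * c0 * (m' - m) ^ 2 / 2) ≤ H := by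
    intro k hk
    obtain ⟨M, hM⟩ := isCompact_Icc.exists_bound_of_continuousOn (hU_cont k hk)
    have hUmeas : AEStronglyMeasurable (U k) (volume.restrict (Icc (0:ℝ) 1)) :=
      (hU_cont k hk).aestronglyMeasurable measurableSet_Icc
    have hUbdd : ∀ᵐ x ∂(volume.restrict (Icc (0:ℝ) 1)), ‖U k x‖ ≤ M := by
      filter_upwards [ae_restrict_mem measurableSet_Icc] with x hx
      exact hM x hx
    have gInt : IntegrableOn (fun x => h x * U k x) (Icc (0:ℝ) 1) := by
      have := Integrable.bdd_mul hh_int hUmeas hUbdd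
      exact this.congr (Filter.Eventually.of_forall fun x => mul_comm _ _)
    have gIntS : ∀ s ⊆ Icc (0:ℝ) 1, IntegrableOn (fun x => h x * U k x) s :=
      fun s hs => gInt.mono_set hs
    -- subsets
    have hs0m : Ioc (0:ℝ) m ⊆ Icc (0:ℝ) 1 := fun x hx => ⟨hx.1.le, le_trans hx.2 hm1⟩
    have hsmm' : Ioc m m' ⊆ Icc (0:ℝ) 1 := fun x hx => ⟨le_trans hm0 hx.1.le, le_trans hx.2 hm'01.2⟩
    have hst1 : Ioc t 1 ⊆ Icc (0:ℝ) 1 := fun x hx => ⟨le_trans ht01.1 hx.1.le, hx.2⟩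
    -- splitting
    have hsplit : (∫ x in Set.Ioc (0:ℝ) 1, h x * U k x)
        = (∫ x in Set.Ioc (0:ℝ) m, h x * U k x) + ((∫ x in Set.Ioc m m', h x * U k x)
          + ((∫ x in Set.Ioc m' t, h x * U k x) + ∫ x in Set.Ioc t 1, h x * U k x)) := by
      rw [← setIntegral_union (Ioc_disjoint_Ioc_of_le le_rfl) measurableSet_Ioc
            (gIntS _ hsub1) (gIntS _ hst1),
          Ioc_union_Ioc_eq_Ioc (le_of_lt hm't) ht1,
          ← setIntegral_union (Ioc_disjoint_Ioc_of_le le_rfl) measurableSet_Ioc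
            (gIntS _ hsmm') (gIntS _ (fun x hx => ⟨le_trans hm'01.1 hx.1.le, hx.2⟩)),
          Ioc_union_Ioc_eq_Ioc (le_of_lt hmm') (by linarith),
          ← setIntegral_union (Ioc_disjoint_Ioc_of_le le_rfl) measurableSet_Ioc
            (gIntS _ hs0m) (gIntS _ (fun x hx => ⟨le_trans hm0 hx.1.le, hx.2⟩)),
          Ioc_union_Ioc_eq_Ioc hm0 (by linarith)]
    -- piece on (t, 1] is zero
    have hD : (∫ x in Set.Ioc t 1, h x * U k x) = 0 := by
      apply MeasureTheory.integral_eq_zero_of_ae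
      filter_upwards [ae_restrict_mem measurableSet_Ioc, ae_restrict_of_ae hzero] with x hx hz
      simp [hz hx]
    -- piece on (m, m'] is nonnegative
    have hB : 0 ≤ ∫ x in Set.Ioc m m', h x * U k x := by
      apply MeasureTheory.integral_nonneg_of_ae
      filter_upwards [ae_restrict_mem measurableSet_Ioc, ae_restrict_of_ae hsign] with x hx hs
      have hx01 : x ∈ Icc (0:ℝ) 1 := hsmm' hx
      have h1 := hU_one k hk x hx01
      have h2 := hs ⟨hx.1, by linarith [hx.2]⟩
      simp only [Pi.zero_apply]
      nlinarith
    -- piece on (m', t] is at least U k m' * c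
    have hC : U k m' * c ≤ ∫ x in Set.Ioc m' t, h x * U k x := by
      rw [← MeasureTheory.integral_const_mul]
      apply MeasureTheory.integral_mono_ae ((hInt _ hsub1).const_mul _) (gIntS _ hsub1)
      filter_upwards [ae_restrict_mem measurableSet_Ioc, ae_restrict_of_ae hsign] with x hx hs
      have hx01 : x ∈ Icc (0:ℝ) 1 := hsub1 hx
      have hhx : 0 ≤ h x := hs ⟨lt_trans hmm' hx.1, hx.2⟩
      have hUx : U k m' ≤ U k x := hU_mono k hk m' hm'01 x hx01 hx.1.le
      calc U k m' * h x = h x * U k m' := mul_comm _ _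
        _ ≤ h x * U k x := mul_le_mul_of_nonneg_left hUx hhx
        _ = h x * U k x := rfl
    -- piece on (0, m] is bounded by U k m * H
    have hA : |∫ x in Set.Ioc (0:ℝ) m, h x * U k x| ≤ U k m * H := by
      have hUm_nn : 0 ≤ U k m := le_trans zero_le_one (hU_one k hk m hm01)
      have step1 : |∫ x in Set.Ioc (0:ℝ) m, h x * U k x|
          ≤ ∫ x in Set.Ioc (0:ℝ) m, |h x| * |U k x| := by
        simpa [Real.norm_eq_abs, abs_mul] using
          MeasureTheory.norm_integral_le_integral_norm
            (μ := volume.restrict (Set.Ioc (0:ℝ) m)) (fun x => h x * U k x)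
      have step2 : (∫ x in Set.Ioc (0:ℝ) m, |h x| * |U k x|)
          ≤ ∫ x in Set.Ioc (0:ℝ) m, |h x| * U k m := by
        have habs : IntegrableOn (fun x => |h x| * |U k x|) (Set.Ioc (0:ℝ) m) := by
          apply ((gIntS _ hs0m).abs).congr
          exact Filter.Eventually.of_forall fun x => (abs_mul _ _)
        apply MeasureTheory.integral_mono_ae habs (((hInt _ hs0m).abs).mul_const _)
        filter_upwards [ae_restrict_mem measurableSet_Ioc] with x hx
        have hx01 : x ∈ Icc (0:ℝ) 1 := hs0m hx
        have hU1 : 1 ≤ U k x := hU_one k hk x hx01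
        have hUx : U k x ≤ U k m := hU_mono k hk x hx01 m hm01 hx.2
        rw [abs_of_nonneg (by linarith : (0:ℝ) ≤ U k x)]
        exact mul_le_mul_of_nonneg_left hUx (abs_nonneg _)
      have step3 : (∫ x in Set.Ioc (0:ℝ) m, |h x| * U k m)
          = (∫ x in Set.Ioc (0:ℝ) m, |h x|) * U k m := MeasureTheory.integral_mul_const _ _
      have step4 : (∫ x in Set.Ioc (0:ℝ) m, |h x|) ≤ H := by
        apply setIntegral_mono_set (hh_int.abs)
          (Filter.Eventually.of_forall fun x => abs_nonneg _)
        exact HasSubset.Subset.eventuallyLE hs0m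
      calc |∫ x in Set.Ioc (0:ℝ) m, h x * U k x| ≤ _ := step1
        _ ≤ _ := step2
        _ = (∫ x in Set.Ioc (0:ℝ) m, |h x|) * U k m := step3
        _ ≤ H * U k m := mul_le_mul_of_nonneg_right step4 hUm_nn
        _ = U k m * H := mul_comm _ _
    -- combine
    have horth' := horth k hk
    rw [hsplit, hD] at horth'
    have hUm'c : U k m' * c ≤ U k m * H := by
      have h1 : (∫ x in Set.Ioc m' t, h x * U k x)
          ≤ -(∫ x in Set.Ioc (0:ℝ) m, h x * U k x) - (∫ x in Set.Ioc m m', h x * U k x) := by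
        linarith
      have h2 : -(∫ x in Set.Ioc (0:ℝ) m, h x * U k x)
          ≤ |∫ x in Set.Ioc (0:ℝ) m, h x * U k x| := neg_le_abs _
      linarith
    have hgrow := hU_growth k hk m hm01 m' hm'01 (le_of_lt hmm')
    have hUm1 : 1 ≤ U k m := hU_one k hk m hm01
    have hfactor : U k m * ((1 + k ^ 2 * c0 * (m' - m) ^ 2 / 2) * c) ≤ U k m * H := by
      have := mul_le_mul_of_nonneg_right hgrow hc_nn
      calc U k m * ((1 + k ^ 2 * c0 * (m' - m) ^ 2 / 2) * c)
          = U k m * (1 + k ^ 2 * c0 * (m' - m) ^ 2 / 2) * c := by ring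
        _ ≤ U k m' * c := this
        _ ≤ U k m * H := hUm'c
    have := le_of_mul_le_mul_left hfactor (by linarith : (0:ℝ) < U k m)
    linarith [this]
  -- choose k large to contradict
  set d := m' - m with hd_def
  have hd_pos : 0 < d := by simp [hd_def]; linarith
  set A := 2 * H / (c * c0 * d ^ 2) with hA_def
  have hden_pos : 0 < c * c0 * d ^ 2 := by positivity
  have hA_nn : 0 ≤ A := by positivity
  set k0 := Real.sqrt A + 1 with hk0_def
  have hk0_pos : 0 < k0 := by positivity
  have hsq : Real.sqrt A ^ 2 = A := Real.sq_sqrt hA_nn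
  have hk0sq : A + 1 ≤ k0 ^ 2 := by
    have := Real.sqrt_nonneg A
    nlinarith
  have hAc : A * (c * c0 * d ^ 2) = 2 * H := div_mul_cancel₀ _ (ne_of_gt hden_pos)
  have hfin := main k0 hk0_pos
  have hint := mul_le_mul_of_nonneg_right
    (mul_le_mul_of_nonneg_left hk0sq hc_pos.le)
    (by positivity : (0:ℝ) ≤ c0 * d ^ 2 / 2)
  clear_value d A k0
  nlinarith [hfin, hAc, hden_pos, hint, hc_pos]

/-- Theorem 1, Property C: if `h` is integrable on `[0,1]`, keeps a
fixed sign a.e. on each subinterval of a finite partition `0 = z₀ < z₁ < ⋯ < zₙ = 1`,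
and `∫₀¹ h(x) u₁(x,k) u₂(x,k) dx = 0` for all `k > 0` (where `u_j(·,k)` are the
solutions of the Volterra equations with coefficients `q_j`), then `h = 0` a.e.
on `[0,1]`. -/
theorem property_C
    (c0 c1 : ℝ) (hc0 : 0 < c0) (hc1 : 0 < c1)
    (q1 q2 : ℝ → ℝ) (hq1_meas : Measurable q1) (hq2_meas : Measurable q2)
    (hq1_bnd : ∀ x ∈ Set.Icc (0:ℝ) 1, c0 ≤ q1 x ∧ q1 x ≤ c1)
    (hq2_bnd : ∀ x ∈ Set.Icc (0:ℝ) 1, c0 ≤ q2 x ∧ q2 x ≤ c1)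
    (u1 u2 : ℝ → ℝ → ℝ)
    (hu1_cont : ∀ k > 0, ContinuousOn (u1 k) (Set.Icc (0:ℝ) 1))
    (hu2_cont : ∀ k > 0, ContinuousOn (u2 k) (Set.Icc (0:ℝ) 1))
    (hu1 : ∀ k > 0, ∀ x ∈ Set.Icc (0:ℝ) 1,
      u1 k x = 1 + k ^ 2 * ∫ s in (0:ℝ)..x, (x - s) * q1 s * u1 k s)
    (hu2 : ∀ k > 0, ∀ x ∈ Set.Icc (0:ℝ) 1,
      u2 k x = 1 + k ^ 2 * ∫ s in (0:ℝ)..x, (x - s) * q2 s * u2 k s)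
    (h : ℝ → ℝ) (hh_int : IntegrableOn h (Set.Icc (0:ℝ) 1))
    (n : ℕ) (hn : 0 < n) (z : ℕ → ℝ)
    (hz0 : z 0 = 0) (hzn : z n = 1)
    (hz_mono : ∀ m < n, z m < z (m + 1))
    (h_sign : ∀ m < n,
      (∀ᵐ x, x ∈ Set.Icc (z m) (z (m + 1)) → 0 ≤ h x) ∨
      (∀ᵐ x, x ∈ Set.Icc (z m) (z (m + 1)) → h x ≤ 0))
    (horth : ∀ k > (0:ℝ), ∫ x in (0:ℝ)..1, h x * u1 k x * u2 k x = 0) :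
    ∀ᵐ x, x ∈ Set.Icc (0:ℝ) 1 → h x = 0 := by
  classical
  set U : ℝ → ℝ → ℝ := fun k x => u1 k x * u2 k x with hU_def
  have hU_cont : ∀ k > (0:ℝ), ContinuousOn (U k) (Icc (0:ℝ) 1) :=
    fun k hk => (hu1_cont k hk).mul (hu2_cont k hk)
  have h1one := fun (k:ℝ) (hk : k > 0) =>
    volterra_one_le hc0 hq1_meas hq1_bnd (hu1_cont k hk) (hu1 k hk)
  have h2one := fun (k:ℝ) (hk : k > 0) =>
    volterra_one_le hc0 hq2_meas hq2_bnd (hu2_cont k hk) (hu2 k hk)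
  have h1mono := fun (k:ℝ) (hk : k > 0) =>
    volterra_mono hc0 hq1_meas hq1_bnd (hu1_cont k hk) (hu1 k hk)
  have h2mono := fun (k:ℝ) (hk : k > 0) =>
    volterra_mono hc0 hq2_meas hq2_bnd (hu2_cont k hk) (hu2 k hk)
  have h1growth := fun (k:ℝ) (hk : k > 0) =>
    volterra_growth hc0 hq1_meas hq1_bnd (hu1_cont k hk) (hu1 k hk)
  have hU_one : ∀ k > (0:ℝ), ∀ x ∈ Icc (0:ℝ) 1, 1 ≤ U k x := by
    intro k hk x hx
    have h1 := h1one k hk x hx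
    have h2 := h2one k hk x hx
    simp only [hU_def]
    nlinarith
  have hU_mono : ∀ k > (0:ℝ), ∀ a ∈ Icc (0:ℝ) 1, ∀ b ∈ Icc (0:ℝ) 1, a ≤ b →
      U k a ≤ U k b := by
    intro k hk a ha b hb hab
    have h1 := h1mono k hk a ha b hb hab
    have h2 := h2mono k hk a ha b hb hab
    have h1a := h1one k hk a ha
    have h2a := h2one k hk a ha
    simp only [hU_def]
    nlinarith
  have hU_growth : ∀ k > (0:ℝ), ∀ a ∈ Icc (0:ℝ) 1, ∀ b ∈ Icc (0:ℝ) 1, a ≤ b →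
      U k a * (1 + k ^ 2 * c0 * (b - a) ^ 2 / 2) ≤ U k b := by
    intro k hk a ha b hb hab
    have hg1 := h1growth k hk a ha b hb hab
    have h2 := h2mono k hk a ha b hb hab
    have h1a := h1one k hk a ha
    have h2a := h2one k hk a ha
    have h1b := h1one k hk b hb
    have hfac : (0:ℝ) ≤ 1 + k ^ 2 * c0 * (b - a) ^ 2 / 2 := by positivity
    simp only [hU_def]
    nlinarith [mul_le_mul_of_nonneg_left h2 (by nlinarith : (0:ℝ) ≤ u1 k a * (1 + k ^ 2 * c0 * (b - a) ^ 2 / 2)), mul_le_mul_of_nonneg_right hg1 (by linarith : (0:ℝ) ≤ u2 k b)]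
  have horth' : ∀ k > (0:ℝ), ∫ x in Set.Ioc (0:ℝ) 1, h x * U k x = 0 := by
    intro k hk
    have hI := horth k hk
    rw [intervalIntegral.integral_of_le zero_le_one] at hI
    calc (∫ x in Set.Ioc (0:ℝ) 1, h x * U k x)
        = ∫ x in Set.Ioc (0:ℝ) 1, h x * u1 k x * u2 k x := by
          apply MeasureTheory.integral_congr_ae
          apply Filter.Eventually.of_forall
          intro x
          simp only [hU_def]
          ring
      _ = 0 := hI
  set S : Set ℝ := {t | 0 ≤ t ∧ ∀ᵐ x, x ∈ Set.Ioc t 1 → h x = 0} with hS_def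
  have h1S : (1:ℝ) ∈ S :=
    ⟨zero_le_one, Filter.Eventually.of_forall fun x hx => absurd hx.2 (not_le.2 hx.1)⟩
  have hSne : S.Nonempty := ⟨1, h1S⟩
  have hSbdd : BddBelow S := ⟨0, fun s hs => hs.1⟩
  set t0 := sInf S with ht0_def
  have ht0_nn : 0 ≤ t0 := le_csInf hSne fun s hs => hs.1
  have ht0_le1 : t0 ≤ 1 := csInf_le hSbdd h1S
  have hzero_star : ∀ᵐ x, x ∈ Set.Ioc t0 1 → h x = 0 := by
    have hseq : ∀ n : ℕ, ∃ s ∈ S, s < t0 + 1/(n+1) := by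
      intro N
      apply exists_lt_of_csInf_lt hSne
      have : (0:ℝ) < 1/(N+1) := by positivity
      linarith
    choose ts hts hlt using hseq
    have hae : ∀ᵐ x, ∀ N : ℕ, x ∈ Set.Ioc (ts N) 1 → h x = 0 :=
      ae_all_iff.2 fun N => (hts N).2
    filter_upwards [hae] with x hx hmem
    obtain ⟨N, hN⟩ := exists_nat_one_div_lt (by linarith [hmem.1] : (0:ℝ) < x - t0)
    refine hx N ⟨?_, hmem.2⟩
    have := hlt N
    push_cast at this hN ⊢
    linarith
  have ht0_eq : t0 = 0 := by
    by_contra hne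
    have ht0_pos : 0 < t0 := lt_of_le_of_ne ht0_nn (Ne.symm hne)
    obtain ⟨j, hjn, hjlt, hjge⟩ : ∃ j < n, z j < t0 ∧ t0 ≤ z (j+1) := by
      have key : ∀ N : ℕ, z 0 < t0 → t0 ≤ z N → ∃ j < N, z j < t0 ∧ t0 ≤ z (j+1) := by
        intro N
        induction N with
        | zero => intro h1 h2; exact absurd (lt_of_lt_of_le h1 h2) (lt_irrefl _)
        | succ N ih =>
          intro h1 h2
          rcases le_or_gt t0 (z N) with hle | hlt
          · obtain ⟨j, hj1, hj2, hj3⟩ := ih h1 hle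
            exact ⟨j, Nat.lt_succ_of_lt hj1, hj2, hj3⟩
          · exact ⟨N, Nat.lt_succ_self _, hlt, h2⟩
      exact key n (by rw [hz0]; exact ht0_pos) (by rw [hzn]; exact ht0_le1)
    have hz_nonneg : 0 ≤ z j := by
      have hmon : ∀ i, i ≤ n → z 0 ≤ z i := by
        intro i
        induction i with
        | zero => intro _; exact le_refl _
        | succ i ih =>
          intro hi
          have hh1 := ih (le_trans (Nat.le_succ i) hi)
          have hh2 := hz_mono i (lt_of_lt_of_le (Nat.lt_succ_self i) hi)
          linarith
      have := hmon j (le_of_lt hjn)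
      rwa [hz0] at this
    set g := t0 - z j with hg_def
    have hg_pos : 0 < g := by rw [hg_def]; linarith
    set m := z j + g/3 with hm_def
    set m' := z j + 2*g/3 with hm'_def
    have hm0 : 0 ≤ m := by rw [hm_def]; linarith
    have hmm' : m < m' := by rw [hm_def, hm'_def]; linarith
    have hm't : m' < t0 := by rw [hm'_def, hg_def]; linarith
    have hsub : Set.Ioc m t0 ⊆ Set.Icc (z j) (z (j+1)) := by
      intro x hx
      constructor
      · have : z j ≤ m := by rw [hm_def]; linarith
        linarith [hx.1]
      · exact le_trans hx.2 hjge
    have hnzS : ¬ (∀ᵐ x, x ∈ Set.Ioc m' 1 → h x = 0) := by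
      intro hcon
      have hmem : m' ∈ S := ⟨by linarith, hcon⟩
      have := csInf_le hSbdd hmem
      rw [← ht0_def] at this
      linarith
    rcases h_sign j hjn with hs | hs
    · exact key_contra hc0 U hU_cont hU_one hU_mono hU_growth h hh_int m m' t0 hm0 hmm'
        hm't ht0_le1
        (by filter_upwards [hs] with x hx hmem; exact hx (hsub hmem)) hzero_star hnzS horth'
    · refine key_contra hc0 U hU_cont hU_one hU_mono hU_growth (fun x => -h x) hh_int.neg
        m m' t0 hm0 hmm' hm't ht0_le1 ?_ ?_ ?_ ?_
      · filter_upwards [hs] with x hx hmem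
        simpa using hx (hsub hmem)
      · filter_upwards [hzero_star] with x hx hmem
        simp [hx hmem]
      · intro hcon
        apply hnzS
        filter_upwards [hcon] with x hx hmem
        simpa using hx hmem
      · intro k hk
        simp only [neg_mul]
        rw [MeasureTheory.integral_neg, horth' k hk, neg_zero]
  rw [ht0_eq] at hzero_star
  have h0 : ∀ᵐ (x:ℝ), x ∉ ({0} : Set ℝ) :=
    measure_eq_zero_iff_ae_notMem.mp Real.volume_singleton
  filter_upwards [hzero_star, h0] with x hx hx0 hmem
  have hxne : x ≠ 0 := by simpa using hx0
  exact hx ⟨lt_of_le_of_ne hmem.1 (Ne.symm hxne), hmem.2⟩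
end

section
/- Let $c_0, c_1 > 0$ and let $q : [0,1] \to \mathbb{R}$ be measurable with $c_0 \le q(x) \le c_1$ on $[0,1]$. For each $k > 0$ let $u(\cdot,k)$ be the continuous solution of $u(x,k) = 1 + k^2 \int_0^x (x-s) q(s) u(s,k)\,ds$. Then $u(x,k)$ is monotone nondecreasing in $k$: for all $0 < k_1 \le k_2$ and all $x \in [0,1]$, $u(x,k_1) \le u(x,k_2)$. -/
open MeasureTheory intervalIntegral

/-- Gronwall-type lemma by iteration: a nonnegative continuous function on `[0,1]`
satisfying `f x ≤ K * ∫₀ˣ f` must be `≤ 0`. -/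
lemma my_gronwall (f : ℝ → ℝ) (hf : ContinuousOn f (Set.Icc 0 1))
    (hpos : ∀ x ∈ Set.Icc (0:ℝ) 1, 0 ≤ f x)
    (K : ℝ) (hK : 0 ≤ K)
    (h : ∀ x ∈ Set.Icc (0:ℝ) 1, f x ≤ K * ∫ s in (0:ℝ)..x, f s) :
    ∀ x ∈ Set.Icc (0:ℝ) 1, f x ≤ 0 := by
  obtain ⟨C, hC⟩ := (isCompact_Icc).exists_bound_of_continuousOn hf
  have hC0 : 0 ≤ C := le_trans (abs_nonneg _) (hC 0 (by norm_num))
  have key : ∀ n : ℕ, ∀ x ∈ Set.Icc (0:ℝ) 1,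
      f x ≤ C * K ^ n / n.factorial * x ^ n := by
    intro n
    induction n with
    | zero =>
      intro x hx
      simpa using le_trans (le_abs_self _) (hC x hx)
    | succ n ih =>
      intro x hx
      obtain ⟨hx0, hx1⟩ := hx
      have hfi : IntervalIntegrable f volume 0 x := by
        apply ContinuousOn.intervalIntegrable
        rw [Set.uIcc_of_le hx0]
        exact hf.mono (Set.Icc_subset_Icc le_rfl hx1)
      have hgi : IntervalIntegrable (fun s => C * K ^ n / n.factorial * s ^ n)
          volume 0 x := (Continuous.intervalIntegrable (by continuity) _ _)
      have hint : ∫ s in (0:ℝ)..x, f s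
          ≤ ∫ s in (0:ℝ)..x, C * K ^ n / n.factorial * s ^ n := by
        apply intervalIntegral.integral_mono_on hx0 hfi hgi
        intro s hs
        exact ih s ⟨hs.1, le_trans hs.2 hx1⟩
      have hval : ∫ s in (0:ℝ)..x, C * K ^ n / n.factorial * s ^ n
          = C * K ^ n / n.factorial * (x ^ (n + 1) / (n + 1)) := by
        rw [intervalIntegral.integral_const_mul, integral_pow]
        norm_num
      calc f x ≤ K * ∫ s in (0:ℝ)..x, f s := h x ⟨hx0, hx1⟩
        _ ≤ K * (C * K ^ n / n.factorial * (x ^ (n + 1) / (n + 1))) := by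
            rw [← hval]; exact mul_le_mul_of_nonneg_left hint hK
        _ = C * K ^ (n + 1) / (n + 1).factorial * x ^ (n + 1) := by
            have hfac : ((n + 1).factorial : ℝ) = (n + 1) * n.factorial := by
              rw [Nat.factorial_succ]; push_cast; ring
            have h1 : (0:ℝ) < (n : ℝ) + 1 := by positivity
            have h2 : (0:ℝ) < (n.factorial : ℝ) := by positivity
            rw [hfac]
            field_simp
            ring
  intro x hx
  have hlim : Filter.Tendsto (fun n : ℕ => C * (K ^ n / n.factorial))
      Filter.atTop (nhds 0) := by
    have := (FloorSemiring.tendsto_pow_div_factorial_atTop K).const_mul C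
    simpa using this
  apply ge_of_tendsto' hlim
  intro n
  have h1 : f x ≤ C * K ^ n / n.factorial * x ^ n := key n x hx
  have h2 : x ^ n ≤ 1 := pow_le_one₀ hx.1 hx.2
  have h3 : 0 ≤ C * K ^ n / n.factorial := by positivity
  calc f x ≤ C * K ^ n / n.factorial * x ^ n := h1
    _ ≤ C * K ^ n / n.factorial * 1 := mul_le_mul_of_nonneg_left h2 h3
    _ = C * (K ^ n / n.factorial) := by ring

/-- If `w` is continuous on `[0,1]` and `-w x ≤ K ∫₀ˣ max (-w s) 0`, then `w ≥ 0`. -/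
lemma nonneg_of_neg_part_bound (w : ℝ → ℝ) (hw : ContinuousOn w (Set.Icc 0 1))
    (K : ℝ) (hK : 0 ≤ K)
    (h : ∀ x ∈ Set.Icc (0:ℝ) 1, -w x ≤ K * ∫ s in (0:ℝ)..x, max (-w s) 0) :
    ∀ x ∈ Set.Icc (0:ℝ) 1, 0 ≤ w x := by
  set f : ℝ → ℝ := fun x => max (-w x) 0 with hf_def
  have hf : ContinuousOn f (Set.Icc 0 1) :=
    (continuous_id.max continuous_const).comp_continuousOn hw.neg
  have hpos : ∀ x ∈ Set.Icc (0:ℝ) 1, 0 ≤ f x := fun x _ => le_max_right _ _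
  have hb : ∀ x ∈ Set.Icc (0:ℝ) 1, f x ≤ K * ∫ s in (0:ℝ)..x, f s := by
    intro x hx
    have hint : 0 ≤ ∫ s in (0:ℝ)..x, f s :=
      intervalIntegral.integral_nonneg hx.1 (fun s _ => le_max_right _ _)
    have : (0:ℝ) ≤ K * ∫ s in (0:ℝ)..x, f s := mul_nonneg hK hint
    exact max_le (h x hx) this
  have := my_gronwall f hf hpos K hK hb
  intro x hx
  have h1 : f x ≤ 0 := this x hx
  have h2 : -w x ≤ f x := le_max_left _ _
  linarith

/-- Integrability of the Volterra kernel against a function continuous on `[0,1]`. -/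
lemma kernel_intervalIntegrable (q : ℝ → ℝ) (hq : Measurable q) (c1 : ℝ)
    (hqb : ∀ s ∈ Set.Icc (0:ℝ) 1, |q s| ≤ c1)
    (g : ℝ → ℝ) (hg : ContinuousOn g (Set.Icc 0 1))
    (x : ℝ) (hx : x ∈ Set.Icc (0:ℝ) 1) :
    IntervalIntegrable (fun s => (x - s) * q s * g s) volume 0 x := by
  obtain ⟨C, hC⟩ := isCompact_Icc.exists_bound_of_continuousOn hg
  have hC0 : 0 ≤ C := le_trans (norm_nonneg _) (hC 0 (by norm_num))
  have hc1 : 0 ≤ c1 := le_trans (abs_nonneg _) (hqb 0 (by norm_num))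
  have hsub : Set.Ioc (0:ℝ) x ⊆ Set.Icc 0 1 := fun s hs =>
    ⟨le_of_lt hs.1, le_trans hs.2 hx.2⟩
  rw [intervalIntegrable_iff, Set.uIoc_of_le hx.1]
  have hg' : AEMeasurable g (volume.restrict (Set.Ioc (0:ℝ) x)) :=
    (hg.mono hsub).aemeasurable measurableSet_Ioc
  have hmeas : AEStronglyMeasurable (fun s => (x - s) * q s * g s)
      (volume.restrict (Set.Ioc 0 x)) :=
    ((((measurable_const.sub measurable_id).mul hq).aemeasurable.mul hg')).aestronglyMeasurable
  apply Integrable.mono' (integrable_const (c1 * C)) hmeas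
  rw [ae_restrict_iff' measurableSet_Ioc]
  filter_upwards with s hs
  have hs' : s ∈ Set.Icc (0:ℝ) 1 := hsub hs
  have h1 : |x - s| ≤ 1 := by
    have hs1 := hs.1; have hs2 := hs.2
    rw [abs_le]; constructor <;> linarith [hx.1, hx.2]
  have h2 : |q s| ≤ c1 := hqb s hs'
  have h3 : ‖g s‖ ≤ C := hC s hs'
  have h3' : |g s| ≤ C := h3
  calc ‖(x - s) * q s * g s‖ = |x - s| * |q s| * |g s| := by
        simp [abs_mul, Real.norm_eq_abs]
    _ ≤ 1 * c1 * C := by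
        apply mul_le_mul _ h3' (abs_nonneg _) (by positivity)
        exact mul_le_mul h1 h2 (abs_nonneg _) (by norm_num)
    _ = c1 * C := by ring

/-- The Volterra solution `u(x,k)` is monotone nondecreasing in `k`:
for `0 < k₁ ≤ k₂` and `x ∈ [0,1]`, `u(x,k₁) ≤ u(x,k₂)`. -/
theorem volterra_solution_monotone_in_k
    (c0 c1 : ℝ) (hc0 : 0 < c0) (hc1 : 0 < c1)
    (q : ℝ → ℝ) (hq_meas : Measurable q)
    (hq_bnd : ∀ x ∈ Set.Icc (0:ℝ) 1, c0 ≤ q x ∧ q x ≤ c1)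
    (u : ℝ → ℝ → ℝ)
    (hu_cont : ∀ k > 0, ContinuousOn (u k) (Set.Icc (0:ℝ) 1))
    (hu : ∀ k > 0, ∀ x ∈ Set.Icc (0:ℝ) 1,
      u k x = 1 + k ^ 2 * ∫ s in (0:ℝ)..x, (x - s) * q s * u k s) :
    ∀ k₁ k₂ : ℝ, 0 < k₁ → k₁ ≤ k₂ → ∀ x ∈ Set.Icc (0:ℝ) 1, u k₁ x ≤ u k₂ x := by
  intro k₁ k₂ hk₁ hk12
  have hk₂ : 0 < k₂ := lt_of_lt_of_le hk₁ hk12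
  have hqabs : ∀ s ∈ Set.Icc (0:ℝ) 1, |q s| ≤ c1 := by
    intro s hs
    obtain ⟨h1, h2⟩ := hq_bnd s hs
    rw [abs_le]; exact ⟨by linarith, h2⟩
  have hqpos : ∀ s ∈ Set.Icc (0:ℝ) 1, 0 ≤ q s := by
    intro s hs; linarith [(hq_bnd s hs).1]
  -- Step A: `u k₂ ≥ 0` on `[0,1]`.
  have hpos2 : ∀ x ∈ Set.Icc (0:ℝ) 1, 0 ≤ u k₂ x := by
    apply nonneg_of_neg_part_bound (u k₂) (hu_cont k₂ hk₂) (k₂ ^ 2 * c1) (by positivity)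
    intro x hx
    set f : ℝ → ℝ := fun s => max (-(u k₂ s)) 0 with hf_def
    have hfc : ContinuousOn f (Set.Icc 0 1) :=
      (continuous_id.max continuous_const).comp_continuousOn (hu_cont k₂ hk₂).neg
    have hI : IntervalIntegrable (fun s => (x - s) * q s * u k₂ s) volume 0 x :=
      kernel_intervalIntegrable q hq_meas c1 hqabs (u k₂) (hu_cont k₂ hk₂) x hx
    have hJ : IntervalIntegrable (fun s => -(c1 * f s)) volume 0 x := by
      apply ContinuousOn.intervalIntegrable
      rw [Set.uIcc_of_le hx.1]
      exact ((continuousOn_const.mul hfc).neg).mono (Set.Icc_subset_Icc le_rfl hx.2)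
    have hmono : ∫ s in (0:ℝ)..x, -(c1 * f s)
        ≤ ∫ s in (0:ℝ)..x, (x - s) * q s * u k₂ s := by
      apply intervalIntegral.integral_mono_on hx.1 hJ hI
      intro s hs
      have hs' : s ∈ Set.Icc (0:ℝ) 1 := ⟨hs.1, le_trans hs.2 hx.2⟩
      have hA : 0 ≤ (x - s) * q s := mul_nonneg (by linarith [hs.2]) (hqpos s hs')
      have hB : (x - s) * q s ≤ c1 := by
        calc (x - s) * q s ≤ 1 * c1 := by
              apply mul_le_mul _ (hq_bnd s hs').2 (hqpos s hs') (by norm_num)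
              · linarith [hs.1, hx.2]
          _ = c1 := by ring
      have hu' : -(u k₂ s) ≤ f s := le_max_left _ _
      have hf0 : 0 ≤ f s := le_max_right _ _
      nlinarith
    have hJval : ∫ s in (0:ℝ)..x, -(c1 * f s) = -(c1 * ∫ s in (0:ℝ)..x, f s) := by
      rw [intervalIntegral.integral_neg, intervalIntegral.integral_const_mul]
    have heq := hu k₂ hk₂ x hx
    have hk2sq : (0:ℝ) ≤ k₂ ^ 2 := by positivity
    rw [hJval] at hmono
    nlinarith [mul_le_mul_of_nonneg_left hmono hk2sq]
  -- Step B: `u k₂ - u k₁ ≥ 0` on `[0,1]`.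
  have hmain : ∀ x ∈ Set.Icc (0:ℝ) 1, 0 ≤ u k₂ x - u k₁ x := by
    set w : ℝ → ℝ := fun x => u k₂ x - u k₁ x with hw_def
    have hwc : ContinuousOn w (Set.Icc 0 1) := (hu_cont k₂ hk₂).sub (hu_cont k₁ hk₁)
    apply nonneg_of_neg_part_bound w hwc (k₁ ^ 2 * c1) (by positivity)
    intro x hx
    set f : ℝ → ℝ := fun s => max (-(w s)) 0 with hf_def
    have hfc : ContinuousOn f (Set.Icc 0 1) :=
      (continuous_id.max continuous_const).comp_continuousOn hwc.neg
    have hI1 : IntervalIntegrable (fun s => (x - s) * q s * u k₁ s) volume 0 x :=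
      kernel_intervalIntegrable q hq_meas c1 hqabs (u k₁) (hu_cont k₁ hk₁) x hx
    have hI2 : IntervalIntegrable (fun s => (x - s) * q s * u k₂ s) volume 0 x :=
      kernel_intervalIntegrable q hq_meas c1 hqabs (u k₂) (hu_cont k₂ hk₂) x hx
    have hJ : IntervalIntegrable (fun s => c1 * f s) volume 0 x := by
      apply ContinuousOn.intervalIntegrable
      rw [Set.uIcc_of_le hx.1]
      exact (continuousOn_const.mul hfc).mono (Set.Icc_subset_Icc le_rfl hx.2)
    -- the second integral is nonnegative
    have hI2nonneg : 0 ≤ ∫ s in (0:ℝ)..x, (x - s) * q s * u k₂ s := by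
      apply intervalIntegral.integral_nonneg hx.1
      intro s hs
      have hs' : s ∈ Set.Icc (0:ℝ) 1 := ⟨hs.1, le_trans hs.2 hx.2⟩
      exact mul_nonneg (mul_nonneg (by linarith [hs.2]) (hqpos s hs')) (hpos2 s hs')
    -- difference estimate
    have hmono : ∫ s in (0:ℝ)..x, ((x - s) * q s * u k₁ s - (x - s) * q s * u k₂ s)
        ≤ ∫ s in (0:ℝ)..x, c1 * f s := by
      apply intervalIntegral.integral_mono_on hx.1 (hI1.sub hI2) hJ
      intro s hs
      have hs' : s ∈ Set.Icc (0:ℝ) 1 := ⟨hs.1, le_trans hs.2 hx.2⟩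
      have hA : 0 ≤ (x - s) * q s := mul_nonneg (by linarith [hs.2]) (hqpos s hs')
      have hB : (x - s) * q s ≤ c1 := by
        calc (x - s) * q s ≤ 1 * c1 := by
              apply mul_le_mul _ (hq_bnd s hs').2 (hqpos s hs') (by norm_num)
              · linarith [hs.1, hx.2]
          _ = c1 := by ring
      have hu' : -(w s) ≤ f s := le_max_left _ _
      have hf0 : 0 ≤ f s := le_max_right _ _
      have hww : w s = u k₂ s - u k₁ s := rfl
      nlinarith
    have hsub : ∫ s in (0:ℝ)..x, ((x - s) * q s * u k₁ s - (x - s) * q s * u k₂ s)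
        = (∫ s in (0:ℝ)..x, (x - s) * q s * u k₁ s)
          - ∫ s in (0:ℝ)..x, (x - s) * q s * u k₂ s :=
      intervalIntegral.integral_sub hI1 hI2
    have hJval : ∫ s in (0:ℝ)..x, c1 * f s = c1 * ∫ s in (0:ℝ)..x, f s :=
      intervalIntegral.integral_const_mul _ _
    have heq1 := hu k₁ hk₁ x hx
    have heq2 := hu k₂ hk₂ x hx
    have hk1sq : (0:ℝ) ≤ k₁ ^ 2 := by positivity
    have hksq : k₁ ^ 2 ≤ k₂ ^ 2 := by nlinarith
    rw [hsub, hJval] at hmono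
    have hww : w x = u k₂ x - u k₁ x := rfl
    nlinarith [mul_le_mul_of_nonneg_left hmono hk1sq,
      mul_le_mul_of_nonneg_right hksq hI2nonneg]
  intro x hx
  linarith [hmain x hx]
end

section
/- Let $c_0, c_1 > 0$, $k > 0$, and let $q : [0,1] \to \mathbb{R}$ be measurable with $c_0 \le q(x) \le c_1$ on $[0,1]$, and let $u : [0,1] \to \mathbb{R}$ be the continuous solution of $u(x) = 1 + k^2 \int_0^x (x-s) q(s) u(s)\,ds$. Then for all $0 \le y \le x \le 1$, $\frac{u(x)}{u(y)} \ge 1 + \frac{1}{2} k^2 c_0 (x-y)^2$. -/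
open MeasureTheory intervalIntegral

/-- For the Volterra solution `u` and `0 ≤ y ≤ x ≤ 1`,
`u(x)/u(y) ≥ 1 + (1/2) k² c₀ (x-y)²`. -/
theorem volterra_solution_ratio_lower_bound
    (c0 c1 k : ℝ) (hc0 : 0 < c0) (hc1 : 0 < c1) (hk : 0 < k)
    (q : ℝ → ℝ) (hq_meas : Measurable q)
    (hq_bnd : ∀ x ∈ Set.Icc (0:ℝ) 1, c0 ≤ q x ∧ q x ≤ c1)
    (u : ℝ → ℝ) (hu_cont : ContinuousOn u (Set.Icc (0:ℝ) 1))
    (hu : ∀ x ∈ Set.Icc (0:ℝ) 1,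
      u x = 1 + k ^ 2 * ∫ s in (0:ℝ)..x, (x - s) * q s * u s) :
    ∀ y x : ℝ, 0 ≤ y → y ≤ x → x ≤ 1 →
      1 + (1 / 2) * k ^ 2 * c0 * (x - y) ^ 2 ≤ u x / u y := by
  -- bound for u on [0,1]
  obtain ⟨M, hM⟩ : ∃ M, ∀ t ∈ Set.Icc (0:ℝ) 1, ‖u t‖ ≤ M :=
    isCompact_Icc.exists_bound_of_continuousOn hu_cont
  have hM0 : 0 ≤ M := le_trans (norm_nonneg _) (hM 0 ⟨le_rfl, one_pos.le⟩)
  have hu_aesm : AEStronglyMeasurable u (volume.restrict (Set.Icc (0:ℝ) 1)) :=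
    hu_cont.aestronglyMeasurable measurableSet_Icc
  -- integrability helper
  have hInt : ∀ c d a b : ℝ, 0 ≤ a → a ≤ b → b ≤ 1 →
      IntervalIntegrable (fun s => (c + d * s) * q s * u s) volume a b := by
    intro c d a b ha hab hb1
    rw [intervalIntegrable_iff_integrableOn_Icc_of_le hab]
    have hsub : Set.Icc a b ⊆ Set.Icc (0:ℝ) 1 := Set.Icc_subset_Icc ha hb1
    have hrle : volume.restrict (Set.Icc a b) ≤ volume.restrict (Set.Icc (0:ℝ) 1) :=
      Measure.restrict_mono hsub le_rfl
    have hmeas : AEStronglyMeasurable (fun s => (c + d * s) * q s * u s)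
        (volume.restrict (Set.Icc a b)) := by
      exact (((continuous_const.add (continuous_const.mul continuous_id)).aestronglyMeasurable.mul
        hq_meas.aestronglyMeasurable).mul (hu_aesm.mono_measure hrle))
    refine Integrable.mono' (integrable_const ((|c| + |d|) * c1 * M)) hmeas ?_
    filter_upwards [ae_restrict_mem measurableSet_Icc] with s hs
    have hs01 : s ∈ Set.Icc (0:ℝ) 1 := hsub hs
    have hq := hq_bnd s hs01
    have hqn : |q s| ≤ c1 := by
      rw [abs_le]; constructor <;> nlinarith [hq.1, hq.2, hc0.le]
    have hcd : |c + d * s| ≤ |c| + |d| := by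
      calc |c + d * s| ≤ |c| + |d * s| := abs_add_le _ _
        _ ≤ |c| + |d| := by
            rw [abs_mul]
            have : |s| ≤ 1 := abs_le.2 ⟨by linarith [hs01.1], hs01.2⟩
            nlinarith [abs_nonneg d]
    have := hM s hs01
    calc ‖(c + d * s) * q s * u s‖ = |c + d * s| * |q s| * |u s| := by
          simp [abs_mul]
      _ ≤ (|c| + |d|) * c1 * M := by
          apply mul_le_mul (mul_le_mul hcd hqn (abs_nonneg _) (by positivity)) this
            (abs_nonneg _) (mul_nonneg (by positivity) hc1.le)
  have hInt' : ∀ c a b : ℝ, 0 ≤ a → a ≤ b → b ≤ 1 →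
      IntervalIntegrable (fun s => (c - s) * q s * u s) volume a b := by
    intro c a b ha hab hb1
    have := hInt c (-1) a b ha hab hb1
    simpa [sub_eq_add_neg, neg_mul] using this
  -- positivity: u > 0 on [0,1]
  have hupos : ∀ t ∈ Set.Icc (0:ℝ) 1, 0 < u t := by
    by_contra h
    push_neg at h
    obtain ⟨t0, ht0, ht0le⟩ := h
    set B : Set ℝ := Set.Icc (0:ℝ) 1 ∩ u ⁻¹' Set.Iic 0 with hB
    have hBne : B.Nonempty := ⟨t0, ht0, ht0le⟩
    have hBclosed : IsClosed B :=
      hu_cont.preimage_isClosed_of_isClosed isClosed_Icc isClosed_Iic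
    have hBbdd : BddBelow B := ⟨0, fun x hx => hx.1.1⟩
    set X := sInf B with hX
    have hXB : X ∈ B := hBclosed.csInf_mem hBne hBbdd
    have hX0 : 0 ≤ X := hXB.1.1
    have hX1 : X ≤ 1 := hXB.1.2
    -- on [0, X), u > 0
    have hlt : ∀ s, 0 ≤ s → s < X → 0 < u s := by
      intro s hs hsX
      by_contra hus
      push_neg at hus
      have : s ∈ B := ⟨⟨hs, le_trans hsX.le hX1⟩, hus⟩
      exact absurd (csInf_le hBbdd this) (not_le.2 hsX)
    -- the integrand is nonneg on [0, X]
    have hI : 0 ≤ ∫ s in (0:ℝ)..X, (X - s) * q s * u s := by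
      apply intervalIntegral.integral_nonneg hX0
      intro s hs
      rcases eq_or_lt_of_le hs.2 with heq | hlt'
      · simp [heq]
      · have hq := (hq_bnd s ⟨hs.1, le_trans hs.2 hX1⟩).1
        have := hlt s hs.1 hlt'
        have hXs : 0 ≤ X - s := by linarith
        exact mul_nonneg (mul_nonneg hXs (by linarith)) this.le
    have := hu X ⟨hX0, hX1⟩
    have : 0 < u X := by nlinarith [sq_nonneg k]
    exact absurd hXB.2 (not_le.2 this)
  -- u ≥ 1 on [0,1]
  have huge1 : ∀ t ∈ Set.Icc (0:ℝ) 1, 1 ≤ u t := by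
    intro t ht
    have hI : 0 ≤ ∫ s in (0:ℝ)..t, (t - s) * q s * u s := by
      apply intervalIntegral.integral_nonneg ht.1
      intro s hs
      have hs01 : s ∈ Set.Icc (0:ℝ) 1 := ⟨hs.1, le_trans hs.2 ht.2⟩
      have hq := (hq_bnd s hs01).1
      have hus := hupos s hs01
      have hts : 0 ≤ t - s := by linarith [hs.2]
      exact mul_nonneg (mul_nonneg hts (by linarith)) hus.le
    have := hu t ht
    nlinarith [sq_nonneg k]
  -- key identity
  have hkey : ∀ y x : ℝ, 0 ≤ y → y ≤ x → x ≤ 1 →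
      u x = u y + k ^ 2 * ((∫ s in y..x, (x - s) * q s * u s)
        + ∫ s in (0:ℝ)..y, ((x - y) + 0 * s) * q s * u s) := by
    intro y x hy hyx hx1
    have hy1 : y ≤ 1 := le_trans hyx hx1
    have h1 : (∫ s in (0:ℝ)..x, (x - s) * q s * u s)
        = (∫ s in (0:ℝ)..y, (x - s) * q s * u s) + ∫ s in y..x, (x - s) * q s * u s :=
      (integral_add_adjacent_intervals (hInt' x 0 y le_rfl hy hy1)
        (hInt' x y x hy hyx hx1)).symm
    have h2 : (∫ s in (0:ℝ)..y, (x - s) * q s * u s)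
        = (∫ s in (0:ℝ)..y, (y - s) * q s * u s)
          + ∫ s in (0:ℝ)..y, ((x - y) + 0 * s) * q s * u s := by
      rw [← integral_add (hInt' y 0 y le_rfl hy hy1) (hInt (x - y) 0 0 y le_rfl hy hy1)]
      apply integral_congr
      intro s _
      ring
    have hux := hu x ⟨le_trans hy hyx, hx1⟩
    have huy := hu y ⟨hy, hy1⟩
    rw [hux, huy, h1, h2]
    ring
  -- monotonicity
  have hmono : ∀ y x : ℝ, 0 ≤ y → y ≤ x → x ≤ 1 → u y ≤ u x := by
    intro y x hy hyx hx1
    have hy1 : y ≤ 1 := le_trans hyx hx1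
    have hI1 : 0 ≤ ∫ s in y..x, (x - s) * q s * u s := by
      apply intervalIntegral.integral_nonneg hyx
      intro s hs
      have hs01 : s ∈ Set.Icc (0:ℝ) 1 := ⟨le_trans hy hs.1, le_trans hs.2 hx1⟩
      have hq := (hq_bnd s hs01).1
      have hus := hupos s hs01
      have hxs : 0 ≤ x - s := by linarith [hs.2]
      exact mul_nonneg (mul_nonneg hxs (by linarith)) hus.le
    have hI2 : 0 ≤ ∫ s in (0:ℝ)..y, ((x - y) + 0 * s) * q s * u s := by
      apply intervalIntegral.integral_nonneg hy
      intro s hs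
      have hs01 : s ∈ Set.Icc (0:ℝ) 1 := ⟨hs.1, le_trans hs.2 hy1⟩
      have hq := (hq_bnd s hs01).1
      have hus := hupos s hs01
      have hxy : 0 ≤ x - y := by linarith
      have h0 : x - y + 0 * s = x - y := by ring
      rw [h0]
      exact mul_nonneg (mul_nonneg hxy (by linarith)) hus.le
    have := hkey y x hy hyx hx1
    nlinarith [sq_nonneg k]
  -- main estimate
  intro y x hy hyx hx1
  have hy1 : y ≤ 1 := le_trans hyx hx1
  have huy := hupos y ⟨hy, hy1⟩
  have huy1 := huge1 y ⟨hy, hy1⟩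
  -- lower bound on the first integral
  have hI1 : c0 * u y * ((x - y) ^ 2 / 2) ≤ ∫ s in y..x, (x - s) * q s * u s := by
    have hle : (∫ s in y..x, (x - s) * (c0 * u y))
        ≤ ∫ s in y..x, (x - s) * q s * u s := by
      apply integral_mono_on hyx
      · exact (continuous_const.sub continuous_id).mul continuous_const
          |>.intervalIntegrable y x
      · exact hInt' x y x hy hyx hx1
      · intro s hs
        have hs01 : s ∈ Set.Icc (0:ℝ) 1 := ⟨le_trans hy hs.1, le_trans hs.2 hx1⟩
        have hq := (hq_bnd s hs01).1
        have hus : u y ≤ u s := hmono y s hy hs.1 hs01.2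
        have hxs : 0 ≤ x - s := by linarith [hs.2]
        have h1 : (x - s) * (c0 * u y) ≤ (x - s) * (c0 * u s) := by
          apply mul_le_mul_of_nonneg_left _ hxs
          exact mul_le_mul_of_nonneg_left hus hc0.le
        have h2 : (x - s) * (c0 * u s) ≤ (x - s) * q s * u s := by
          have hus' := hupos s hs01
          nlinarith [mul_nonneg (mul_nonneg hxs (sub_nonneg.2 hq)) hus'.le]
        linarith
    have hcomp : (∫ s in y..x, (x - s) * (c0 * u y))
        = c0 * u y * ((x - y) ^ 2 / 2) := by
      rw [intervalIntegral.integral_mul_const]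
      have : (∫ s in y..x, (x - s)) = (x - y) ^ 2 / 2 := by
        rw [intervalIntegral.integral_sub intervalIntegrable_const
          (intervalIntegral.intervalIntegrable_id)]
        simp [integral_id, intervalIntegral.integral_const]
        ring
      rw [this]; ring
    linarith [hcomp ▸ hle]
  have hI2 : 0 ≤ ∫ s in (0:ℝ)..y, ((x - y) + 0 * s) * q s * u s := by
    apply intervalIntegral.integral_nonneg hy
    intro s hs
    have hs01 : s ∈ Set.Icc (0:ℝ) 1 := ⟨hs.1, le_trans hs.2 hy1⟩
    have hq := (hq_bnd s hs01).1
    have hus := hupos s hs01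
    have hxy : 0 ≤ x - y := by linarith
    have h0 : x - y + 0 * s = x - y := by ring
    rw [h0]
    exact mul_nonneg (mul_nonneg hxy (by linarith)) hus.le
  have hkey' := hkey y x hy hyx hx1
  have hsum : c0 * u y * ((x - y) ^ 2 / 2)
      ≤ (∫ s in y..x, (x - s) * q s * u s)
        + ∫ s in (0:ℝ)..y, ((x - y) + 0 * s) * q s * u s := by linarith
  have hmul := mul_le_mul_of_nonneg_left hsum (sq_nonneg k)
  rw [le_div_iff₀ huy]
  nlinarith [hmul, hkey']
end

section
/- Let $c_0, c_1 > 0$ and let $q : [0,1] \to \mathbb{R}$ be measurable with $c_0 \le q(x) \le c_1$ on $[0,1]$. For each $k > 0$ let $u(\cdot,k)$ be the continuous solution of $u(x,k) = 1 + k^2 \int_0^x (x-s) q(s) u(s,k)\,ds$. Then for any fixed $0 \le y < x \le 1$, $\lim_{k \to \infty} \frac{u(y,k)}{u(x,k)} = 0$. -/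
open MeasureTheory intervalIntegral Filter

namespace VolterraAux

/-- Integrability of `(c - s) * q s * f s` on subintervals of `[0,1]`. -/
lemma integrable_aux {c0 c1 : ℝ} {q f : ℝ → ℝ} (hq_meas : Measurable q)
    (hq_bnd : ∀ x ∈ Set.Icc (0:ℝ) 1, c0 ≤ q x ∧ q x ≤ c1)
    (hc0 : 0 ≤ c0)
    (hf_cont : ContinuousOn f (Set.Icc (0:ℝ) 1))
    (c a b : ℝ) (ha : 0 ≤ a) (hab : a ≤ b) (hb : b ≤ 1) :
    IntervalIntegrable (fun s => (c - s) * q s * f s) volume a b := by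
  obtain ⟨M, hM⟩ := (isCompact_Icc (a := (0:ℝ)) (b := 1)).exists_bound_of_continuousOn hf_cont
  rw [intervalIntegrable_iff_integrableOn_Ioc_of_le hab]
  have hsub : Set.Ioc a b ⊆ Set.Icc (0:ℝ) 1 := fun s hs =>
    ⟨le_trans ha hs.1.le, le_trans hs.2 hb⟩
  have hmeas : AEStronglyMeasurable (fun s => (c - s) * q s * f s)
      (volume.restrict (Set.Ioc a b)) := by
    have hfm : AEMeasurable f (volume.restrict (Set.Ioc a b)) :=
      (hf_cont.aemeasurable measurableSet_Icc).mono_measure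
        (Measure.restrict_mono hsub le_rfl)
    exact ((((measurable_const.sub measurable_id).aemeasurable).mul
      hq_meas.aemeasurable).mul hfm).aestronglyMeasurable
  refine ⟨hmeas, ?_⟩
  refine HasFiniteIntegral.restrict_of_bounded (C := (|c| + 1) * (|c1| * |M|))
    measure_Ioc_lt_top ?_
  filter_upwards [ae_restrict_mem measurableSet_Ioc] with s hs
  have hs' := hsub hs
  have h1 : |c - s| ≤ |c| + 1 := by
    have := abs_sub_abs_le_abs_sub c s
    have hsabs : |s| ≤ 1 := abs_le.2 ⟨by linarith [hs'.1], hs'.2⟩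
    calc |c - s| ≤ |c| + |s| := abs_sub c s
      _ ≤ |c| + 1 := by linarith
  have h2 : |q s| ≤ |c1| := by
    obtain ⟨hql, hqu⟩ := hq_bnd s hs'
    rw [abs_le]
    constructor
    · linarith [abs_nonneg c1]
    · linarith [le_abs_self c1]
  have h3 : |f s| ≤ |M| := le_trans (hM s hs') (le_abs_self M)
  calc ‖(c - s) * q s * f s‖ = |c - s| * |q s| * |f s| := by
        simp [abs_mul, Real.norm_eq_abs]
    _ ≤ (|c| + 1) * |c1| * |M| := by
        have := abs_nonneg (c - s)
        have := abs_nonneg (q s)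
        have := abs_nonneg (f s)
        gcongr <;> first | assumption | positivity
    _ = (|c| + 1) * (|c1| * |M|) := by ring

/-- Positivity of the Volterra solution. -/
lemma pos_aux {c0 c1 : ℝ} {q f : ℝ → ℝ} (hc0 : 0 < c0)
    (hq_bnd : ∀ x ∈ Set.Icc (0:ℝ) 1, c0 ≤ q x ∧ q x ≤ c1)
    (hf_cont : ContinuousOn f (Set.Icc (0:ℝ) 1))
    {k : ℝ} (hk : 0 < k)
    (hf : ∀ x ∈ Set.Icc (0:ℝ) 1,
      f x = 1 + k ^ 2 * ∫ s in (0:ℝ)..x, (x - s) * q s * f s) :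
    ∀ s ∈ Set.Icc (0:ℝ) 1, 0 < f s := by
  by_contra hcon
  push_neg at hcon
  obtain ⟨t, ht, htf⟩ := hcon
  set A : Set ℝ := Set.Icc (0:ℝ) 1 ∩ f ⁻¹' Set.Iic 0 with hA
  have hA_ne : A.Nonempty := ⟨t, ht, htf⟩
  have hA_closed : IsClosed A :=
    hf_cont.preimage_isClosed_of_isClosed isClosed_Icc isClosed_Iic
  have hA_bdd : BddBelow A := ⟨0, fun s hs => hs.1.1⟩
  set t₀ := sInf A with ht₀
  have ht₀A : t₀ ∈ A := hA_closed.csInf_mem hA_ne hA_bdd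
  have ht₀Icc : t₀ ∈ Set.Icc (0:ℝ) 1 := ht₀A.1
  have ht₀f : f t₀ ≤ 0 := ht₀A.2
  have hpos_lt : ∀ s, 0 ≤ s → s < t₀ → 0 < f s := by
    intro s hs0 hst
    by_contra h
    push_neg at h
    have : s ∈ A := ⟨⟨hs0, le_trans hst.le ht₀Icc.2⟩, h⟩
    exact absurd (csInf_le hA_bdd this) (not_le.2 hst)
  have hint : 0 ≤ ∫ s in (0:ℝ)..t₀, (t₀ - s) * q s * f s := by
    apply intervalIntegral.integral_nonneg ht₀Icc.1
    intro s hs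
    rcases eq_or_lt_of_le hs.2 with h | h
    · simp [h]
    · have hqs := (hq_bnd s ⟨hs.1, le_trans hs.2 ht₀Icc.2⟩).1
      have hfs := hpos_lt s hs.1 h
      have h1 : 0 ≤ t₀ - s := by linarith
      have h2 : 0 ≤ q s := le_trans hc0.le hqs
      exact mul_nonneg (mul_nonneg h1 h2) hfs.le
  have := hf t₀ ht₀Icc
  nlinarith [sq_nonneg k]

/-- Monotonicity of the Volterra solution. -/
lemma mono_aux {c0 c1 : ℝ} {q f : ℝ → ℝ} (hc0 : 0 < c0) (hq_meas : Measurable q)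
    (hq_bnd : ∀ x ∈ Set.Icc (0:ℝ) 1, c0 ≤ q x ∧ q x ≤ c1)
    (hf_cont : ContinuousOn f (Set.Icc (0:ℝ) 1))
    {k : ℝ} (hk : 0 < k)
    (hf : ∀ x ∈ Set.Icc (0:ℝ) 1,
      f x = 1 + k ^ 2 * ∫ s in (0:ℝ)..x, (x - s) * q s * f s) :
    ∀ a b : ℝ, 0 ≤ a → a ≤ b → b ≤ 1 → f a ≤ f b := by
  intro a b ha hab hb
  have hpos := pos_aux hc0 hq_bnd hf_cont hk hf
  have hIa : IntervalIntegrable (fun s => (b - s) * q s * f s) volume 0 a :=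
    integrable_aux hq_meas hq_bnd hc0.le hf_cont b 0 a le_rfl ha (le_trans hab hb)
  have hIa' : IntervalIntegrable (fun s => (a - s) * q s * f s) volume 0 a :=
    integrable_aux hq_meas hq_bnd hc0.le hf_cont a 0 a le_rfl ha (le_trans hab hb)
  have hIb : IntervalIntegrable (fun s => (b - s) * q s * f s) volume a b :=
    integrable_aux hq_meas hq_bnd hc0.le hf_cont b a b ha hab hb
  have hsplit : (∫ s in (0:ℝ)..b, (b - s) * q s * f s)
      = (∫ s in (0:ℝ)..a, (b - s) * q s * f s)
        + ∫ s in a..b, (b - s) * q s * f s :=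
    (intervalIntegral.integral_add_adjacent_intervals hIa hIb).symm
  have hmono : (∫ s in (0:ℝ)..a, (a - s) * q s * f s)
      ≤ ∫ s in (0:ℝ)..a, (b - s) * q s * f s := by
    apply intervalIntegral.integral_mono_on ha hIa' hIa
    intro s hs
    have hs1 : s ∈ Set.Icc (0:ℝ) 1 := ⟨hs.1, le_trans hs.2 (le_trans hab hb)⟩
    have hq := (hq_bnd s hs1).1
    have hfs := hpos s hs1
    have h2 : 0 ≤ q s := le_trans hc0.le hq
    have : 0 ≤ q s * f s := mul_nonneg h2 hfs.le
    nlinarith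
  have hnonneg : 0 ≤ ∫ s in a..b, (b - s) * q s * f s := by
    apply intervalIntegral.integral_nonneg hab
    intro s hs
    have hs1 : s ∈ Set.Icc (0:ℝ) 1 := ⟨le_trans ha hs.1, le_trans hs.2 hb⟩
    have hq := (hq_bnd s hs1).1
    have hfs := hpos s hs1
    have hbs : 0 ≤ b - s := by linarith [hs.2]
    exact mul_nonneg (mul_nonneg hbs (le_trans hc0.le hq)) hfs.le
  have h1 := hf a ⟨ha, le_trans hab hb⟩
  have h2 := hf b ⟨le_trans ha hab, hb⟩
  rw [h1, h2, hsplit]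
  nlinarith [sq_nonneg k]

end VolterraAux

/-- For fixed `0 ≤ y < x ≤ 1`, the Volterra solutions satisfy
`u(y,k)/u(x,k) → 0` as `k → ∞`. -/
theorem volterra_solution_ratio_tendsto_zero
    (c0 c1 : ℝ) (hc0 : 0 < c0) (hc1 : 0 < c1)
    (q : ℝ → ℝ) (hq_meas : Measurable q)
    (hq_bnd : ∀ x ∈ Set.Icc (0:ℝ) 1, c0 ≤ q x ∧ q x ≤ c1)
    (u : ℝ → ℝ → ℝ)
    (hu_cont : ∀ k > 0, ContinuousOn (u k) (Set.Icc (0:ℝ) 1))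
    (hu : ∀ k > 0, ∀ x ∈ Set.Icc (0:ℝ) 1,
      u k x = 1 + k ^ 2 * ∫ s in (0:ℝ)..x, (x - s) * q s * u k s)
    (y x : ℝ) (hy : 0 ≤ y) (hyx : y < x) (hx : x ≤ 1) :
    Tendsto (fun k : ℝ => u k y / u k x) atTop (nhds 0) := by
  have hyI : y ∈ Set.Icc (0:ℝ) 1 := ⟨hy, le_trans hyx.le hx⟩
  have hxI : x ∈ Set.Icc (0:ℝ) 1 := ⟨le_trans hy hyx.le, hx⟩
  -- key bound for each k > 0
  have key : ∀ k : ℝ, 0 < k →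
      0 ≤ u k y / u k x ∧ u k y / u k x ≤ (2 / (c0 * (x - y) ^ 2)) / k ^ 2 := by
    intro k hk
    have hpos := VolterraAux.pos_aux hc0 hq_bnd (hu_cont k hk) hk (hu k hk)
    have hmono := VolterraAux.mono_aux hc0 hq_meas hq_bnd (hu_cont k hk) hk (hu k hk)
    have huy : 0 < u k y := hpos y hyI
    have hux : 0 < u k x := hpos x hxI
    constructor
    · positivity
    -- u k x ≥ k^2 * c0 * (x-y)^2/2 * u k y
    have hIy : IntervalIntegrable (fun s => (x - s) * q s * u k s) volume 0 y :=
      VolterraAux.integrable_aux hq_meas hq_bnd hc0.le (hu_cont k hk) x 0 y le_rfl hy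
        (le_trans hyx.le hx)
    have hIx : IntervalIntegrable (fun s => (x - s) * q s * u k s) volume y x :=
      VolterraAux.integrable_aux hq_meas hq_bnd hc0.le (hu_cont k hk) x y x hy hyx.le hx
    have hsplit : (∫ s in (0:ℝ)..x, (x - s) * q s * u k s)
        = (∫ s in (0:ℝ)..y, (x - s) * q s * u k s)
          + ∫ s in y..x, (x - s) * q s * u k s :=
      (intervalIntegral.integral_add_adjacent_intervals hIy hIx).symm
    have h0y : 0 ≤ ∫ s in (0:ℝ)..y, (x - s) * q s * u k s := by
      apply intervalIntegral.integral_nonneg hy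
      intro s hs
      have hs1 : s ∈ Set.Icc (0:ℝ) 1 := ⟨hs.1, le_trans hs.2 hyI.2⟩
      have hq := (hq_bnd s hs1).1
      have hfs := hpos s hs1
      have hxs : 0 ≤ x - s := by linarith [hs.2, hyx]
      exact mul_nonneg (mul_nonneg hxs (le_trans hc0.le hq)) hfs.le
    have hIlin : IntervalIntegrable (fun s => (x - s) * c0 * u k y) volume y x := by
      apply ContinuousOn.intervalIntegrable
      fun_prop
    have hyx2 : (∫ s in y..x, (x - s) * c0 * u k y)
        ≤ ∫ s in y..x, (x - s) * q s * u k s := by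
      apply intervalIntegral.integral_mono_on hyx.le hIlin hIx
      intro s hs
      have hs1 : s ∈ Set.Icc (0:ℝ) 1 := ⟨le_trans hy hs.1, le_trans hs.2 hx⟩
      have hq := (hq_bnd s hs1).1
      have hfs : u k y ≤ u k s := hmono y s hy hs.1 hs1.2
      have hxs : 0 ≤ x - s := by linarith [hs.2]
      have hkey : c0 * u k y ≤ q s * u k s :=
        mul_le_mul hq hfs huy.le (le_trans hc0.le hq)
      calc (x - s) * c0 * u k y = (x - s) * (c0 * u k y) := by ring
        _ ≤ (x - s) * (q s * u k s) := mul_le_mul_of_nonneg_left hkey hxs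
        _ = (x - s) * q s * u k s := by ring
    have hcomp : (∫ s in y..x, (x - s) * c0 * u k y)
        = c0 * u k y * ((x - y) ^ 2 / 2) := by
      have : (∫ s in y..x, (x - s) * c0 * u k y)
          = (∫ s in y..x, (x - s)) * (c0 * u k y) := by
        rw [← intervalIntegral.integral_mul_const]
        congr 1; ext s; ring
      rw [this]
      have h1 : (∫ s in y..x, (x - s)) = (x - y) ^ 2 / 2 := by
        have : (∫ s in y..x, (x - s)) = (∫ s in y..x, (x:ℝ)) - ∫ s in y..x, s := by
          rw [← intervalIntegral.integral_sub intervalIntegrable_const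
            intervalIntegrable_id]
        rw [this, intervalIntegral.integral_const, integral_id]
        simp [smul_eq_mul]
        ring
      rw [h1]; ring
    have hlow : k ^ 2 * (c0 * u k y * ((x - y) ^ 2 / 2)) ≤ u k x := by
      have := hu k hk x hxI
      rw [this, hsplit]
      have hk2 : (0:ℝ) ≤ k ^ 2 := sq_nonneg k
      nlinarith [le_trans (le_of_eq hcomp.symm) hyx2]
    -- conclude the ratio bound
    have hden : 0 < k ^ 2 * (c0 * u k y * ((x - y) ^ 2 / 2)) := by
      have hxy : 0 < (x - y) := by linarith
      positivity
    have h1 : u k y / u k x ≤ u k y / (k ^ 2 * (c0 * u k y * ((x - y) ^ 2 / 2))) :=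
      div_le_div_of_nonneg_left huy.le hden hlow
    refine le_trans h1 (le_of_eq ?_)
    have hrw : k ^ 2 * (c0 * u k y * ((x - y) ^ 2 / 2))
        = u k y * (k ^ 2 * c0 * ((x - y) ^ 2 / 2)) := by ring
    rw [hrw, div_mul_cancel_left₀ huy.ne']
    have hk0 : k ≠ 0 := hk.ne'
    have hc00 : c0 ≠ 0 := hc0.ne'
    have hxy0 : x - y ≠ 0 := sub_ne_zero.2 hyx.ne'
    rw [inv_eq_one_div]
    field_simp
  -- squeeze
  have hev : ∀ᶠ k : ℝ in atTop, 0 < k := eventually_gt_atTop 0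
  apply squeeze_zero' (hev.mono fun k hk => (key k hk).1)
    (hev.mono fun k hk => (key k hk).2)
  have : Tendsto (fun k : ℝ => k ^ 2) atTop atTop :=
    tendsto_pow_atTop (by norm_num)
  exact Tendsto.div_atTop tendsto_const_nhds this
end

section
/- Let $c_0, c_1 > 0$, $k > 0$, and let $q_1, q_2 : [0,1] \to \mathbb{R}$ be measurable with $c_0 \le q_j(x) \le c_1$ on $[0,1]$, $j=1,2$. Let $u_j$ be the continuous solution of $u_j(x) = 1 + k^2 \int_0^x (x-s) q_j(s) u_j(s)\,ds$. Let $h : [0,1] \to \mathbb{R}$ be integrable, let $0 \le z < 1$, and suppose $h(x) \ge 0$ for almost every $x \in [z,1]$ and $\int_0^1 h(x) u_1(x) u_2(x)\,dx = 0$. Then for every $y \in (z,1)$, $\int_y^1 h(x)\,dx \le \frac{u_1(z) u_2(z)}{u_1(y) u_2(y)} \int_0^z |h(x)|\,dx$. -/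
open MeasureTheory intervalIntegral

lemma volterra_ge_one_mono (c0 c1 k : ℝ) (hc0 : 0 < c0) (hc1 : 0 < c1)
    (q u : ℝ → ℝ) (hq_meas : Measurable q)
    (hq_bnd : ∀ x ∈ Set.Icc (0:ℝ) 1, c0 ≤ q x ∧ q x ≤ c1)
    (hu_cont : ContinuousOn u (Set.Icc (0:ℝ) 1))
    (hu : ∀ x ∈ Set.Icc (0:ℝ) 1,
      u x = 1 + k ^ 2 * ∫ s in (0:ℝ)..x, (x - s) * q s * u s) :
    (∀ x ∈ Set.Icc (0:ℝ) 1, 1 ≤ u x) ∧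
      (∀ x y : ℝ, 0 ≤ x → x ≤ y → y ≤ 1 → u x ≤ u y) := by
  obtain ⟨M, hM⟩ := isCompact_Icc.exists_bound_of_continuousOn hu_cont
  -- integrability of the kernel on [0,1]
  have hint : ∀ a : ℝ, a ∈ Set.Icc (0:ℝ) 1 →
      IntegrableOn (fun s => (a - s) * q s * u s) (Set.Icc (0:ℝ) 1) := by
    intro a ha
    have hmeas : AEStronglyMeasurable (fun s => (a - s) * q s * u s)
        (volume.restrict (Set.Icc (0:ℝ) 1)) := by
      exact (((continuous_const.sub continuous_id).aestronglyMeasurable.mul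
        hq_meas.aestronglyMeasurable).mul
        (hu_cont.aestronglyMeasurable measurableSet_Icc))
    refine Integrable.mono' (integrable_const (1 * c1 * M)) hmeas ?_
    filter_upwards [ae_restrict_mem measurableSet_Icc] with s hs
    have h1 : |a - s| ≤ 1 := by
      rw [abs_sub_le_iff]; constructor <;> [linarith [ha.1, ha.2, hs.1, hs.2];
        linarith [ha.1, ha.2, hs.1, hs.2]]
    have h2 : |q s| ≤ c1 := by
      have := hq_bnd s hs
      rw [abs_le]; constructor <;> linarith
    have h3 : |u s| ≤ M := hM s hs
    have hM0 : 0 ≤ M := le_trans (abs_nonneg _) h3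
    have : ‖(a - s) * q s * u s‖ = |a - s| * |q s| * |u s| := by
      simp [abs_mul]
    rw [this]
    exact mul_le_mul (mul_le_mul h1 h2 (abs_nonneg _) zero_le_one) h3
      (abs_nonneg _) (by positivity)
  have hsub : ∀ b c : ℝ, b ∈ Set.Icc (0:ℝ) 1 → c ∈ Set.Icc (0:ℝ) 1 →
      Set.uIoc b c ⊆ Set.Icc (0:ℝ) 1 := by
    intro b c hb hc
    exact Set.Ioc_subset_Icc_self.trans
      (Set.Icc_subset_Icc (le_min hb.1 hc.1) (max_le hb.2 hc.2))
  have hII : ∀ a b c : ℝ, a ∈ Set.Icc (0:ℝ) 1 → b ∈ Set.Icc (0:ℝ) 1 →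
      c ∈ Set.Icc (0:ℝ) 1 →
      IntervalIntegrable (fun s => (a - s) * q s * u s) volume b c := by
    intro a b c ha hb hc
    rw [intervalIntegrable_iff]
    exact (hint a ha).mono_set (hsub b c hb hc)
  have hu0 : u 0 = 1 := by
    have := hu 0 ⟨le_refl 0, zero_le_one⟩
    simpa using this
  -- positivity
  have hpos : ∀ x ∈ Set.Icc (0:ℝ) 1, 0 < u x := by
    by_contra hcon
    push_neg at hcon
    obtain ⟨x0, hx0, hx0le⟩ := hcon
    set S : Set ℝ := {x | x ∈ Set.Icc (0:ℝ) 1 ∧ u x ≤ 0} with hS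
    have hSne : S.Nonempty := ⟨x0, hx0, hx0le⟩
    have hSbdd : BddBelow S := ⟨0, fun x hx => hx.1.1⟩
    have hSclosed : IsClosed S := by
      have : S = Set.Icc (0:ℝ) 1 ∩ u ⁻¹' Set.Iic 0 := by
        ext x; simp [hS, Set.mem_Iic]
      rw [this]
      exact hu_cont.preimage_isClosed_of_isClosed isClosed_Icc isClosed_Iic
    have hx1mem : sInf S ∈ S := hSclosed.csInf_mem hSne hSbdd
    set x1 := sInf S with hx1
    have hx1Icc : x1 ∈ Set.Icc (0:ℝ) 1 := hx1mem.1
    have hx1ne : x1 ≠ 0 := by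
      intro hc
      have := hx1mem.2
      rw [hc, hu0] at this
      linarith
    have hx1pos : 0 < x1 := lt_of_le_of_ne hx1Icc.1 (Ne.symm hx1ne)
    have hlt : ∀ s : ℝ, 0 ≤ s → s < x1 → 0 < u s := by
      intro s hs0 hs1
      by_contra hc
      push_neg at hc
      have : s ∈ S := ⟨⟨hs0, le_trans hs1.le hx1Icc.2⟩, hc⟩
      exact absurd (csInf_le hSbdd this) (not_le.2 hs1)
    have hnn : ∀ s ∈ Set.Icc (0:ℝ) x1, 0 ≤ (x1 - s) * q s * u s := by
      intro s hs
      rcases eq_or_lt_of_le hs.2 with heq | hlt'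
      · simp [heq]
      · have hq := (hq_bnd s ⟨hs.1, le_trans hs.2 hx1Icc.2⟩).1
        exact mul_nonneg (mul_nonneg (by linarith [hs.2]) (by linarith))
          (hlt s hs.1 hlt').le
    have hInonneg : 0 ≤ ∫ s in (0:ℝ)..x1, (x1 - s) * q s * u s :=
      intervalIntegral.integral_nonneg hx1pos.le hnn
    have := hu x1 hx1Icc
    nlinarith [hx1mem.2, sq_nonneg k, mul_nonneg (sq_nonneg k) hInonneg]
  -- ≥ 1
  have hge1 : ∀ x ∈ Set.Icc (0:ℝ) 1, 1 ≤ u x := by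
    intro x hx
    have hnn : ∀ s ∈ Set.Icc (0:ℝ) x, 0 ≤ (x - s) * q s * u s := by
      intro s hs
      have hsI : s ∈ Set.Icc (0:ℝ) 1 := ⟨hs.1, le_trans hs.2 hx.2⟩
      exact mul_nonneg (mul_nonneg (by linarith [hs.2]) (by linarith [(hq_bnd s hsI).1]))
        (hpos s hsI).le
    have hInonneg : 0 ≤ ∫ s in (0:ℝ)..x, (x - s) * q s * u s :=
      intervalIntegral.integral_nonneg hx.1 hnn
    have := hu x hx
    nlinarith [mul_nonneg (sq_nonneg k) hInonneg]
  refine ⟨hge1, ?_⟩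
  intro x y hx0 hxy hy1
  have hxI : x ∈ Set.Icc (0:ℝ) 1 := ⟨hx0, le_trans hxy hy1⟩
  have hyI : y ∈ Set.Icc (0:ℝ) 1 := ⟨le_trans hx0 hxy, hy1⟩
  have e1 : ∫ s in (0:ℝ)..y, (y - s) * q s * u s
      = (∫ s in (0:ℝ)..x, (y - s) * q s * u s)
        + ∫ s in x..y, (y - s) * q s * u s :=
    (intervalIntegral.integral_add_adjacent_intervals
      (hII y 0 x hyI ⟨le_refl 0, zero_le_one⟩ hxI) (hII y x y hyI hxI hyI)).symm
  have e2 : (∫ s in (0:ℝ)..x, (y - s) * q s * u s)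
      - ∫ s in (0:ℝ)..x, (x - s) * q s * u s
      = ∫ s in (0:ℝ)..x, ((y - s) * q s * u s - (x - s) * q s * u s) :=
    (intervalIntegral.integral_sub (hII y 0 x hyI ⟨le_refl 0, zero_le_one⟩ hxI)
      (hII x 0 x hxI ⟨le_refl 0, zero_le_one⟩ hxI)).symm
  have h2nn : 0 ≤ ∫ s in (0:ℝ)..x, ((y - s) * q s * u s - (x - s) * q s * u s) := by
    refine intervalIntegral.integral_nonneg hx0 ?_
    intro s hs
    have hsI : s ∈ Set.Icc (0:ℝ) 1 := ⟨hs.1, le_trans hs.2 hxI.2⟩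
    have : (y - s) * q s * u s - (x - s) * q s * u s = (y - x) * (q s * u s) := by ring
    rw [this]
    exact mul_nonneg (by linarith)
      (mul_nonneg (by linarith [(hq_bnd s hsI).1]) (hpos s hsI).le)
  have h3nn : 0 ≤ ∫ s in x..y, (y - s) * q s * u s := by
    refine intervalIntegral.integral_nonneg hxy ?_
    intro s hs
    have hsI : s ∈ Set.Icc (0:ℝ) 1 := ⟨le_trans hx0 hs.1, le_trans hs.2 hy1⟩
    exact mul_nonneg (mul_nonneg (by linarith [hs.2]) (by linarith [(hq_bnd s hsI).1]))
      (hpos s hsI).le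
  have hux := hu x hxI
  have huy := hu y hyI
  have key : 0 ≤ (∫ s in (0:ℝ)..y, (y - s) * q s * u s)
      - ∫ s in (0:ℝ)..x, (x - s) * q s * u s := by
    rw [e1]; linarith
  nlinarith [mul_nonneg (sq_nonneg k) key]


/-- If `h` is integrable on `[0,1]`, nonnegative a.e. on `[z,1]`, and
`∫₀¹ h u₁ u₂ = 0`, then for every `y ∈ (z,1)`,
`∫_y¹ h ≤ (u₁(z)u₂(z))/(u₁(y)u₂(y)) ∫₀ᶻ |h|`. -/
theorem orthogonality_tail_estimate
    (c0 c1 k : ℝ) (hc0 : 0 < c0) (hc1 : 0 < c1) (hk : 0 < k)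
    (q1 q2 : ℝ → ℝ) (hq1_meas : Measurable q1) (hq2_meas : Measurable q2)
    (hq1_bnd : ∀ x ∈ Set.Icc (0:ℝ) 1, c0 ≤ q1 x ∧ q1 x ≤ c1)
    (hq2_bnd : ∀ x ∈ Set.Icc (0:ℝ) 1, c0 ≤ q2 x ∧ q2 x ≤ c1)
    (u1 u2 : ℝ → ℝ)
    (hu1_cont : ContinuousOn u1 (Set.Icc (0:ℝ) 1))
    (hu2_cont : ContinuousOn u2 (Set.Icc (0:ℝ) 1))
    (hu1 : ∀ x ∈ Set.Icc (0:ℝ) 1,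
      u1 x = 1 + k ^ 2 * ∫ s in (0:ℝ)..x, (x - s) * q1 s * u1 s)
    (hu2 : ∀ x ∈ Set.Icc (0:ℝ) 1,
      u2 x = 1 + k ^ 2 * ∫ s in (0:ℝ)..x, (x - s) * q2 s * u2 s)
    (h : ℝ → ℝ) (hh_int : IntegrableOn h (Set.Icc (0:ℝ) 1))
    (z : ℝ) (hz0 : 0 ≤ z) (hz1 : z < 1)
    (hh_nonneg : ∀ᵐ x, x ∈ Set.Icc z 1 → 0 ≤ h x)
    (horth : ∫ x in (0:ℝ)..1, h x * u1 x * u2 x = 0) :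
    ∀ y ∈ Set.Ioo z 1,
      ∫ x in y..(1:ℝ), h x ≤
        (u1 z * u2 z) / (u1 y * u2 y) * ∫ x in (0:ℝ)..z, |h x| := by
  obtain ⟨h1ge, h1mono⟩ := volterra_ge_one_mono c0 c1 k hc0 hc1 q1 u1 hq1_meas
    hq1_bnd hu1_cont hu1
  obtain ⟨h2ge, h2mono⟩ := volterra_ge_one_mono c0 c1 k hc0 hc1 q2 u2 hq2_meas
    hq2_bnd hu2_cont hu2
  intro y hy
  have hzI : z ∈ Set.Icc (0:ℝ) 1 := ⟨hz0, hz1.le⟩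
  have hyI : y ∈ Set.Icc (0:ℝ) 1 := ⟨le_trans hz0 hy.1.le, hy.2.le⟩
  set w : ℝ → ℝ := fun x => u1 x * u2 x with hw
  have hwge : ∀ x ∈ Set.Icc (0:ℝ) 1, 1 ≤ w x := by
    intro x hx
    have := h1ge x hx; have := h2ge x hx
    show (1:ℝ) ≤ u1 x * u2 x
    nlinarith
  have hwmono : ∀ a b : ℝ, 0 ≤ a → a ≤ b → b ≤ 1 → w a ≤ w b := by
    intro a b ha hab hb1
    have haI : a ∈ Set.Icc (0:ℝ) 1 := ⟨ha, le_trans hab hb1⟩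
    have hbI : b ∈ Set.Icc (0:ℝ) 1 := ⟨le_trans ha hab, hb1⟩
    have := h1ge a haI; have := h2ge a haI
    have := h1ge b hbI; have := h2ge b hbI
    have := h1mono a b ha hab hb1; have := h2mono a b ha hab hb1
    show u1 a * u2 a ≤ u1 b * u2 b
    nlinarith
  -- bound on w
  obtain ⟨C, hC⟩ := isCompact_Icc.exists_bound_of_continuousOn (hu1_cont.mul hu2_cont)
  -- integrability of h * w on [0,1]
  have hw_int : IntegrableOn (fun x => h x * w x) (Set.Icc (0:ℝ) 1) := by
    refine Integrable.mono' (hh_int.abs.const_mul C) ?_ ?_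
    · exact hh_int.aestronglyMeasurable.mul
        ((hu1_cont.mul hu2_cont).aestronglyMeasurable measurableSet_Icc)
    · filter_upwards [ae_restrict_mem measurableSet_Icc] with x hx
      have h1 : |w x| ≤ C := hC x hx
      have : ‖h x * w x‖ = |h x| * |w x| := by simp [abs_mul]
      rw [this, mul_comm C |h x|]
      exact mul_le_mul_of_nonneg_left h1 (abs_nonneg _)
  have hsub : ∀ a b : ℝ, a ∈ Set.Icc (0:ℝ) 1 → b ∈ Set.Icc (0:ℝ) 1 →
      Set.uIoc a b ⊆ Set.Icc (0:ℝ) 1 := by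
    intro a b ha hb
    exact Set.Ioc_subset_Icc_self.trans
      (Set.Icc_subset_Icc (le_min ha.1 hb.1) (max_le ha.2 hb.2))
  have hhw_ii : ∀ a b : ℝ, a ∈ Set.Icc (0:ℝ) 1 → b ∈ Set.Icc (0:ℝ) 1 →
      IntervalIntegrable (fun x => h x * w x) volume a b := by
    intro a b ha hb
    rw [intervalIntegrable_iff]
    exact hw_int.mono_set (hsub a b ha hb)
  have hh_ii : ∀ a b : ℝ, a ∈ Set.Icc (0:ℝ) 1 → b ∈ Set.Icc (0:ℝ) 1 →
      IntervalIntegrable h volume a b := by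
    intro a b ha hb
    rw [intervalIntegrable_iff]
    exact hh_int.mono_set (hsub a b ha hb)
  have h0I : (0:ℝ) ∈ Set.Icc (0:ℝ) 1 := ⟨le_refl 0, zero_le_one⟩
  have h1I : (1:ℝ) ∈ Set.Icc (0:ℝ) 1 := ⟨zero_le_one, le_refl 1⟩
  -- rewrite orthogonality
  have horth' : ∫ x in (0:ℝ)..1, h x * w x = 0 := by
    have : (fun x => h x * u1 x * u2 x) = fun x => h x * w x := by
      funext x; rw [hw]; ring
    rwa [← this]
  -- split the integral
  have esplit1 : (∫ x in (0:ℝ)..z, h x * w x) + (∫ x in z..(1:ℝ), h x * w x)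
      = ∫ x in (0:ℝ)..1, h x * w x :=
    intervalIntegral.integral_add_adjacent_intervals (hhw_ii 0 z h0I hzI)
      (hhw_ii z 1 hzI h1I)
  have esplit2 : (∫ x in z..y, h x * w x) + (∫ x in y..(1:ℝ), h x * w x)
      = ∫ x in z..(1:ℝ), h x * w x :=
    intervalIntegral.integral_add_adjacent_intervals (hhw_ii z y hzI hyI)
      (hhw_ii y 1 hyI h1I)
  -- I3 lower bound
  have hI3 : w y * (∫ x in y..(1:ℝ), h x) ≤ ∫ x in y..(1:ℝ), h x * w x := by
    rw [intervalIntegral.integral_of_le hy.2.le,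
      intervalIntegral.integral_of_le hy.2.le]
    have hInt1 : Integrable (fun x => w y * h x) (volume.restrict (Set.Ioc y 1)) :=
      ((hh_int.mono_set (Set.Ioc_subset_Icc_self.trans
        (Set.Icc_subset_Icc hyI.1 (le_refl 1)))).const_mul (w y))
    have hInt2 : Integrable (fun x => h x * w x) (volume.restrict (Set.Ioc y 1)) :=
      hw_int.mono_set (Set.Ioc_subset_Icc_self.trans
        (Set.Icc_subset_Icc hyI.1 (le_refl 1)))
    have hle : (fun x => w y * h x) ≤ᵐ[volume.restrict (Set.Ioc y 1)]
        fun x => h x * w x := by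
      filter_upwards [ae_restrict_of_ae hh_nonneg,
        ae_restrict_mem measurableSet_Ioc] with x hxn hxm
      have hxz : x ∈ Set.Icc z 1 := ⟨le_trans hy.1.le hxm.1.le, hxm.2⟩
      have hhx : 0 ≤ h x := hxn hxz
      have hwle : w y ≤ w x := hwmono y x hyI.1 hxm.1.le hxm.2
      nlinarith
    calc w y * ∫ x in Set.Ioc y 1, h x
        = ∫ x in Set.Ioc y 1, w y * h x := (MeasureTheory.integral_const_mul _ _).symm
      _ ≤ ∫ x in Set.Ioc y 1, h x * w x := integral_mono_ae hInt1 hInt2 hle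
  -- I2 nonneg
  have hI2 : 0 ≤ ∫ x in z..y, h x * w x := by
    rw [intervalIntegral.integral_of_le hy.1.le]
    refine integral_nonneg_of_ae ?_
    filter_upwards [ae_restrict_of_ae hh_nonneg,
      ae_restrict_mem measurableSet_Ioc] with x hxn hxm
    have hxI : x ∈ Set.Icc (0:ℝ) 1 := ⟨le_trans hz0 hxm.1.le, le_trans hxm.2 hy.2.le⟩
    have hhx : 0 ≤ h x := hxn ⟨hxm.1.le, hxI.2⟩
    have := hwge x hxI
    simpa using mul_nonneg hhx (by linarith : (0:ℝ) ≤ w x)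
  -- I1 bound
  have hI1 : |∫ x in (0:ℝ)..z, h x * w x| ≤ (∫ x in (0:ℝ)..z, |h x|) * w z := by
    have step1 : |∫ x in (0:ℝ)..z, h x * w x| ≤ ∫ x in (0:ℝ)..z, |h x * w x| :=
      intervalIntegral.abs_integral_le_integral_abs hz0
    have step2 : ∫ x in (0:ℝ)..z, |h x * w x| ≤ ∫ x in (0:ℝ)..z, |h x| * w z := by
      refine intervalIntegral.integral_mono_on hz0 (hhw_ii 0 z h0I hzI).abs
        ((hh_ii 0 z h0I hzI).abs.mul_const _) ?_
      intro x hx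
      have hxI : x ∈ Set.Icc (0:ℝ) 1 := ⟨hx.1, le_trans hx.2 hzI.2⟩
      have hw1 : 1 ≤ w x := hwge x hxI
      have hwz : w x ≤ w z := hwmono x z hx.1 hx.2 hzI.2
      rw [abs_mul, abs_of_nonneg (by linarith : (0:ℝ) ≤ w x)]
      exact mul_le_mul_of_nonneg_left hwz (abs_nonneg _)
    have step3 : ∫ x in (0:ℝ)..z, |h x| * w z = (∫ x in (0:ℝ)..z, |h x|) * w z :=
      intervalIntegral.integral_mul_const _ _
    calc |∫ x in (0:ℝ)..z, h x * w x| ≤ ∫ x in (0:ℝ)..z, |h x * w x| := step1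
      _ ≤ ∫ x in (0:ℝ)..z, |h x| * w z := step2
      _ = (∫ x in (0:ℝ)..z, |h x|) * w z := step3
  -- combine
  have hwy : 0 < w y := lt_of_lt_of_le zero_lt_one (hwge y hyI)
  have hchain : w y * (∫ x in y..(1:ℝ), h x) ≤ w z * ∫ x in (0:ℝ)..z, |h x| := by
    have hI3' : (∫ x in y..(1:ℝ), h x * w x)
        = - (∫ x in (0:ℝ)..z, h x * w x) - ∫ x in z..y, h x * w x := by
      have := esplit1; have := esplit2; rw [horth'] at esplit1; linarith
    have habs := abs_le.1 hI1
    calc w y * (∫ x in y..(1:ℝ), h x) ≤ ∫ x in y..(1:ℝ), h x * w x := hI3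
      _ = - (∫ x in (0:ℝ)..z, h x * w x) - ∫ x in z..y, h x * w x := hI3'
      _ ≤ w z * ∫ x in (0:ℝ)..z, |h x| := by
          have := habs.1
          nlinarith [hI2]
  rw [div_mul_eq_mul_div, le_div_iff₀ hwy]
  calc (∫ x in y..(1:ℝ), h x) * (u1 y * u2 y) = w y * ∫ x in y..(1:ℝ), h x := by
        rw [hw]; ring
    _ ≤ w z * ∫ x in (0:ℝ)..z, |h x| := hchain
    _ = u1 z * u2 z * ∫ x in (0:ℝ)..z, |h x| := by rw [hw]
end

section
/- Let $c_0, c_1 > 0$, $k > 0$, and let $q_1, q_2 : [0,1] \to \mathbb{R}$ be measurable with $c_0 \le q_j(x) \le c_1$ on $[0,1]$, $j=1,2$; set $p := q_2 - q_1$. Let $u_1$ be the continuous solution of $u_1(x) = 1 + k^2 \int_0^x (x-s) q_1(s) u_1(s)\,ds$, and for $j = 1,2$ let $\psi_j : [0,1] \to \mathbb{R}$ be continuous functions satisfying $\psi_j(x) = \psi_j(0) + k^2 \int_0^x (x-s) q_j(s) \psi_j(s)\,ds$ (so $\psi_j'(0) = 0$). If $\psi_1(1) = \psi_2(1)$ and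 $\psi_1'(1) = \psi_2'(1)$, then $\int_0^1 p(x)\, u_1(x)\, \psi_2(x)\,dx = 0$. -/
open MeasureTheory intervalIntegral

open Set

private lemma integOn_mul' {q v : ℝ → ℝ} {c : ℝ} (hq : Measurable q)
    (hb : ∀ x ∈ Icc (0:ℝ) 1, |q x| ≤ c) (hv : ContinuousOn v (Icc (0:ℝ) 1)) :
    IntegrableOn (fun x => q x * v x) (Icc (0:ℝ) 1) := by
  obtain ⟨C, hC⟩ := isCompact_Icc.exists_bound_of_continuousOn hv
  have hmeas : AEStronglyMeasurable (fun x => q x * v x) (volume.restrict (Icc (0:ℝ) 1)) :=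
    (hq.aemeasurable.mul (hv.aemeasurable measurableSet_Icc)).aestronglyMeasurable
  refine Integrable.mono' (integrable_const (c * C)) hmeas ?_
  filter_upwards [ae_restrict_mem measurableSet_Icc] with x hx
  have h1 : |q x| ≤ c := hb x hx
  have h2 : ‖v x‖ ≤ C := hC x hx
  have : ‖q x * v x‖ = |q x| * ‖v x‖ := by
    simp [abs_mul, Real.norm_eq_abs]
  rw [this]
  exact mul_le_mul h1 h2 (norm_nonneg _) ((abs_nonneg _).trans h1)

private lemma II_of_integOn {f : ℝ → ℝ} (hf : IntegrableOn f (Icc (0:ℝ) 1))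
    {a b : ℝ} (ha : a ∈ Icc (0:ℝ) 1) (hb : b ∈ Icc (0:ℝ) 1) :
    IntervalIntegrable f volume a b := by
  refine (hf.mono_set ?_).intervalIntegrable
  have h01 : Icc (0:ℝ) 1 = uIcc (0:ℝ) 1 := (uIcc_of_le zero_le_one).symm
  rw [h01]
  exact uIcc_subset_uIcc (h01 ▸ ha) (h01 ▸ hb)

private lemma sliceH_int {f g : ℝ → ℝ} (hf : Measurable f) (hg : Measurable g)
    (hgi : IntegrableOn g (Icc (0:ℝ) 1)) (x : ℝ) :
    IntegrableOn (fun s => if x ≤ s then (s - x) * f x * g s else 0) (Icc (0:ℝ) 1) := by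
  have base : IntegrableOn (fun s => (s - x) * f x * g s) (Icc (0:ℝ) 1) := by
    refine Integrable.mono' (hgi.norm.const_mul ((|x| + 1) * |f x|)) ?_ ?_
    · exact (((measurable_id.sub_const x).mul_const (f x)).mul hg).aestronglyMeasurable
    · filter_upwards [ae_restrict_mem measurableSet_Icc] with s hs
      have h1 : |s - x| ≤ |x| + 1 := by
        have := abs_sub_abs_le_abs_sub s x
        have hs1 : |s| ≤ 1 := abs_le.mpr ⟨by linarith [hs.1], hs.2⟩
        have := abs_sub s x
        calc |s - x| ≤ |s| + |x| := abs_sub s x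
          _ ≤ |x| + 1 := by linarith
      have : ‖(s - x) * f x * g s‖ = |s - x| * |f x| * |g s| := by
        simp [abs_mul, Real.norm_eq_abs]
      rw [this, Real.norm_eq_abs]
      have h2 : |s - x| * |f x| ≤ (|x| + 1) * |f x| :=
        mul_le_mul_of_nonneg_right h1 (abs_nonneg _)
      exact mul_le_mul_of_nonneg_right h2 (abs_nonneg _)
  refine Integrable.mono' base.norm ?_ ?_
  · refine (Measurable.ite (measurableSet_le measurable_const measurable_id) ?_
      measurable_const).aestronglyMeasurable
    exact ((measurable_id.sub_const x).mul_const (f x)).mul hg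
  · refine Filter.Eventually.of_forall fun s => ?_
    by_cases h : x ≤ s <;> simp [h] <;> positivity

private lemma sliceH_int' {f g : ℝ → ℝ} (hf : Measurable f) (hg : Measurable g)
    (hfi : IntegrableOn f (Icc (0:ℝ) 1)) (s : ℝ) :
    IntegrableOn (fun x => if x ≤ s then (s - x) * f x * g s else 0) (Icc (0:ℝ) 1) := by
  have base : IntegrableOn (fun x => (s - x) * f x * g s) (Icc (0:ℝ) 1) := by
    refine Integrable.mono' (hfi.norm.const_mul ((|s| + 1) * |g s|)) ?_ ?_
    · exact (((measurable_const.sub measurable_id).mul hf).mul_const (g s)).aestronglyMeasurable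
    · filter_upwards [ae_restrict_mem measurableSet_Icc] with x hx
      have hx1 : |x| ≤ 1 := abs_le.mpr ⟨by linarith [hx.1], hx.2⟩
      have h1 : |s - x| ≤ |s| + 1 := by
        calc |s - x| ≤ |s| + |x| := abs_sub s x
          _ ≤ |s| + 1 := by linarith
      have : ‖(s - x) * f x * g s‖ = |s - x| * |f x| * |g s| := by
        simp [abs_mul, Real.norm_eq_abs]
      rw [this, Real.norm_eq_abs]
      calc |s - x| * |f x| * |g s| = (|s - x| * |g s|) * |f x| := by ring
        _ ≤ ((|s| + 1) * |g s|) * |f x| := by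
            exact mul_le_mul_of_nonneg_right
              (mul_le_mul_of_nonneg_right h1 (abs_nonneg _)) (abs_nonneg _)
  refine Integrable.mono' base.norm ?_ ?_
  · refine (Measurable.ite (measurableSet_le measurable_id measurable_const) ?_
      measurable_const).aestronglyMeasurable
    exact (((measurable_const.sub measurable_id).mul hf).mul_const (g s))
  · refine Filter.Eventually.of_forall fun x => ?_
    by_cases h : x ≤ s <;> simp [h] <;> positivity

private lemma triangle_swap {f g : ℝ → ℝ} (hf : Measurable f) (hg : Measurable g)
    (hfi : IntegrableOn f (Icc (0:ℝ) 1)) (hgi : IntegrableOn g (Icc (0:ℝ) 1)) :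
    (∫ x in (0:ℝ)..1, ∫ s in x..1, (s - x) * f x * g s)
      = ∫ s in (0:ℝ)..1, ∫ x in (0:ℝ)..s, (s - x) * f x * g s := by
  set H : ℝ → ℝ → ℝ := fun x s => if x ≤ s then (s - x) * f x * g s else 0 with hHdef
  have claim1 : ∀ x ∈ Icc (0:ℝ) 1,
      (∫ s in (0:ℝ)..1, H x s) = ∫ s in x..1, (s - x) * f x * g s := by
    intro x hx
    have i1 : IntervalIntegrable (H x) volume 0 x :=
      II_of_integOn (sliceH_int hf hg hgi x) ⟨le_refl 0, zero_le_one⟩ hx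
    have i2 : IntervalIntegrable (H x) volume x 1 :=
      II_of_integOn (sliceH_int hf hg hgi x) hx ⟨zero_le_one, le_refl 1⟩
    rw [← integral_add_adjacent_intervals i1 i2]
    have e1 : (∫ s in (0:ℝ)..x, H x s) = 0 := by
      have : (∫ s in (0:ℝ)..x, H x s) = ∫ s in (0:ℝ)..x, (0:ℝ) := by
        apply integral_congr
        intro s hs
        rw [uIcc_of_le hx.1] at hs
        by_cases h : x ≤ s
        · have : s = x := le_antisymm hs.2 h
          simp [hHdef, this]
        · simp [hHdef, h]
      rw [this, intervalIntegral.integral_zero]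
    have e2 : (∫ s in x..1, H x s) = ∫ s in x..1, (s - x) * f x * g s := by
      apply integral_congr
      intro s hs
      rw [uIcc_of_le hx.2] at hs
      simp [hHdef, hs.1]
    rw [e1, e2, zero_add]
  have claim2 : ∀ s ∈ Icc (0:ℝ) 1,
      (∫ x in (0:ℝ)..1, H x s) = ∫ x in (0:ℝ)..s, (s - x) * f x * g s := by
    intro s hs
    have i1 : IntervalIntegrable (fun x => H x s) volume 0 s :=
      II_of_integOn (sliceH_int' hf hg hfi s) ⟨le_refl 0, zero_le_one⟩ hs
    have i2 : IntervalIntegrable (fun x => H x s) volume s 1 :=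
      II_of_integOn (sliceH_int' hf hg hfi s) hs ⟨zero_le_one, le_refl 1⟩
    rw [← integral_add_adjacent_intervals i1 i2]
    have e1 : (∫ x in (0:ℝ)..s, H x s) = ∫ x in (0:ℝ)..s, (s - x) * f x * g s := by
      apply integral_congr
      intro x hx
      rw [uIcc_of_le hs.1] at hx
      simp [hHdef, hx.2]
    have e2 : (∫ x in s..1, H x s) = 0 := by
      have : (∫ x in s..1, H x s) = ∫ x in s..1, (0:ℝ) := by
        apply integral_congr
        intro x hx
        rw [uIcc_of_le hs.2] at hx
        by_cases h : x ≤ s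
        · have : x = s := le_antisymm h hx.1
          simp [hHdef, this]
        · simp [hHdef, h]
      rw [this, intervalIntegral.integral_zero]
    rw [e1, e2, add_zero]
  set μ := volume.restrict (Ioc (0:ℝ) 1) with hμdef
  have hfμ : Integrable f μ := hfi.mono_set Ioc_subset_Icc_self
  have hgμ : Integrable g μ := hgi.mono_set Ioc_subset_Icc_self
  have hprod : Integrable (Function.uncurry H) (μ.prod μ) := by
    have hfg : Integrable (fun p : ℝ × ℝ => f p.1 * g p.2) (μ.prod μ) :=
      Integrable.mul_prod hfμ hgμ
    refine Integrable.mono' hfg.norm ?_ ?_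
    · refine (Measurable.ite (measurableSet_le measurable_fst measurable_snd) ?_
        measurable_const).aestronglyMeasurable
      exact ((measurable_snd.sub measurable_fst).mul (hf.comp measurable_fst)).mul
        (hg.comp measurable_snd)
    · have hrw : μ.prod μ = (volume.prod volume).restrict ((Ioc (0:ℝ) 1) ×ˢ (Ioc (0:ℝ) 1)) :=
        Measure.prod_restrict _ _
      rw [hrw]
      filter_upwards [ae_restrict_mem (measurableSet_Ioc.prod measurableSet_Ioc)] with p hp
      obtain ⟨hp1, hp2⟩ := hp
      by_cases h : p.1 ≤ p.2
      · have hb : |p.2 - p.1| ≤ 1 := by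
          rw [abs_of_nonneg (by linarith)]
          linarith [hp1.1, hp2.2]
        have : ‖Function.uncurry H p‖ = |p.2 - p.1| * ‖f p.1 * g p.2‖ := by
          simp [Function.uncurry, hHdef, h, abs_mul, Real.norm_eq_abs, mul_assoc]
        rw [this]
        calc |p.2 - p.1| * ‖f p.1 * g p.2‖ ≤ 1 * ‖f p.1 * g p.2‖ :=
              mul_le_mul_of_nonneg_right hb (norm_nonneg _)
          _ = ‖f p.1 * g p.2‖ := one_mul _
      · simp [Function.uncurry, hHdef, h]
        positivity
  have lhs_eq : (∫ x in (0:ℝ)..1, ∫ s in x..1, (s - x) * f x * g s)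
      = ∫ x, (∫ s, H x s ∂μ) ∂μ := by
    rw [integral_of_le zero_le_one]
    refine setIntegral_congr_fun measurableSet_Ioc fun x hx => ?_
    rw [← claim1 x (Ioc_subset_Icc_self hx), integral_of_le zero_le_one]
  have rhs_eq : (∫ s in (0:ℝ)..1, ∫ x in (0:ℝ)..s, (s - x) * f x * g s)
      = ∫ s, (∫ x, H x s ∂μ) ∂μ := by
    rw [integral_of_le zero_le_one]
    refine setIntegral_congr_fun measurableSet_Ioc fun s hs => ?_
    rw [← claim2 s (Ioc_subset_Icc_self hs), integral_of_le zero_le_one]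
  rw [lhs_eq, rhs_eq]
  exact integral_integral_swap hprod

private lemma integOn_cont_mul {F v : ℝ → ℝ} {c : ℝ} (hF : Measurable F)
    (hb : ∀ x ∈ Icc (0:ℝ) 1, |F x| ≤ c) (hv : ContinuousOn v (Icc (0:ℝ) 1)) :
    IntegrableOn (fun x => v x * F x) (Icc (0:ℝ) 1) :=
  (integOn_mul' hF hb hv).congr (Filter.Eventually.of_forall fun x => mul_comm _ _)


/-- orthogonality identity (25): if `ψ₁, ψ₂` solve the Neumann
integral equations with coefficients `q₁, q₂` and share the same Cauchy data at
`x = 1` (values and derivatives `ψⱼ'(1) = k² ∫₀¹ qⱼ ψⱼ`), then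
`∫₀¹ p(x) u₁(x) ψ₂(x) dx = 0`, where `p = q₂ - q₁` and `u₁` is the Volterra
solution for `q₁`. -/
theorem orthogonality_identity
    (c0 c1 k : ℝ) (hc0 : 0 < c0) (hc1 : 0 < c1) (hk : 0 < k)
    (q1 q2 : ℝ → ℝ) (hq1_meas : Measurable q1) (hq2_meas : Measurable q2)
    (hq1_bnd : ∀ x ∈ Set.Icc (0:ℝ) 1, c0 ≤ q1 x ∧ q1 x ≤ c1)
    (hq2_bnd : ∀ x ∈ Set.Icc (0:ℝ) 1, c0 ≤ q2 x ∧ q2 x ≤ c1)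
    (u1 : ℝ → ℝ) (hu1_cont : ContinuousOn u1 (Set.Icc (0:ℝ) 1))
    (hu1 : ∀ x ∈ Set.Icc (0:ℝ) 1,
      u1 x = 1 + k ^ 2 * ∫ s in (0:ℝ)..x, (x - s) * q1 s * u1 s)
    (ψ1 ψ2 : ℝ → ℝ)
    (hψ1_cont : ContinuousOn ψ1 (Set.Icc (0:ℝ) 1))
    (hψ2_cont : ContinuousOn ψ2 (Set.Icc (0:ℝ) 1))
    (hψ1 : ∀ x ∈ Set.Icc (0:ℝ) 1,
      ψ1 x = ψ1 0 + k ^ 2 * ∫ s in (0:ℝ)..x, (x - s) * q1 s * ψ1 s)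
    (hψ2 : ∀ x ∈ Set.Icc (0:ℝ) 1,
      ψ2 x = ψ2 0 + k ^ 2 * ∫ s in (0:ℝ)..x, (x - s) * q2 s * ψ2 s)
    (hval : ψ1 1 = ψ2 1)
    (hderiv : k ^ 2 * (∫ s in (0:ℝ)..1, q1 s * ψ1 s)
            = k ^ 2 * ∫ s in (0:ℝ)..1, q2 s * ψ2 s) :
    ∫ x in (0:ℝ)..1, (q2 x - q1 x) * u1 x * ψ2 x = 0 := by
  have hk2 : (k ^ 2 : ℝ) ≠ 0 := by positivity
  have h0m : (0:ℝ) ∈ Icc (0:ℝ) 1 := ⟨le_refl 0, zero_le_one⟩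
  have h1m : (1:ℝ) ∈ Icc (0:ℝ) 1 := ⟨zero_le_one, le_refl 1⟩
  have hIcc_uIcc : Icc (0:ℝ) 1 = uIcc (0:ℝ) 1 := (uIcc_of_le zero_le_one).symm
  have hsub : ∀ x ∈ Icc (0:ℝ) 1, uIcc (0:ℝ) x ⊆ Icc (0:ℝ) 1 := by
    intro x hx
    rw [hIcc_uIcc]
    exact uIcc_subset_uIcc (hIcc_uIcc ▸ h0m) (hIcc_uIcc ▸ hx)
  -- clamp
  set cl : ℝ → ℝ := fun x => max 0 (min x 1) with hcldef
  have hclcont : Continuous cl :=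
    Continuous.max continuous_const (Continuous.min continuous_id continuous_const)
  have hclmem : ∀ x, cl x ∈ Icc (0:ℝ) 1 := fun x =>
    ⟨le_max_left _ _, max_le zero_le_one (min_le_right _ _)⟩
  have hclid : ∀ x ∈ Icc (0:ℝ) 1, cl x = x := fun x hx => by
    simp only [hcldef]
    rw [min_eq_left hx.2, max_eq_right hx.1]
  set U : ℝ → ℝ := fun x => u1 (cl x) with hUdef
  set P1 : ℝ → ℝ := fun x => ψ1 (cl x) with hP1def
  set P2 : ℝ → ℝ := fun x => ψ2 (cl x) with hP2def
  have hUc : Continuous U := hu1_cont.comp_continuous hclcont hclmem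
  have hP1c : Continuous P1 := hψ1_cont.comp_continuous hclcont hclmem
  have hP2c : Continuous P2 := hψ2_cont.comp_continuous hclcont hclmem
  have hUeq : ∀ x ∈ Icc (0:ℝ) 1, U x = u1 x := fun x hx => by
    simp only [hUdef]; rw [hclid x hx]
  have hP1eq : ∀ x ∈ Icc (0:ℝ) 1, P1 x = ψ1 x := fun x hx => by
    simp only [hP1def]; rw [hclid x hx]
  have hP2eq : ∀ x ∈ Icc (0:ℝ) 1, P2 x = ψ2 x := fun x hx => by
    simp only [hP2def]; rw [hclid x hx]
  -- bounds
  have hq1b : ∀ x ∈ Icc (0:ℝ) 1, |q1 x| ≤ c1 := fun x hx => by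
    rw [abs_of_pos (lt_of_lt_of_le hc0 (hq1_bnd x hx).1)]; exact (hq1_bnd x hx).2
  have hq2b : ∀ x ∈ Icc (0:ℝ) 1, |q2 x| ≤ c1 := fun x hx => by
    rw [abs_of_pos (lt_of_lt_of_le hc0 (hq2_bnd x hx).1)]; exact (hq2_bnd x hx).2
  obtain ⟨CU, hCU⟩ := isCompact_Icc.exists_bound_of_continuousOn hUc.continuousOn
  obtain ⟨CP1, hCP1⟩ := isCompact_Icc.exists_bound_of_continuousOn hP1c.continuousOn
  obtain ⟨CP2, hCP2⟩ := isCompact_Icc.exists_bound_of_continuousOn hP2c.continuousOn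
  have hCU' : ∀ x ∈ Icc (0:ℝ) 1, |U x| ≤ CU := fun x hx => by
    have := hCU x hx; rwa [Real.norm_eq_abs] at this
  have hCP1' : ∀ x ∈ Icc (0:ℝ) 1, |P1 x| ≤ CP1 := fun x hx => by
    have := hCP1 x hx; rwa [Real.norm_eq_abs] at this
  have hCP2' : ∀ x ∈ Icc (0:ℝ) 1, |P2 x| ≤ CP2 := fun x hx => by
    have := hCP2 x hx; rwa [Real.norm_eq_abs] at this
  -- f and g
  set f : ℝ → ℝ := fun x => q1 x * U x with hfdef
  set g : ℝ → ℝ := fun x => q1 x * P1 x - q2 x * P2 x with hgdef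
  have hfm : Measurable f := hq1_meas.mul hUc.measurable
  have hgm : Measurable g := (hq1_meas.mul hP1c.measurable).sub (hq2_meas.mul hP2c.measurable)
  have hfb : ∀ x ∈ Icc (0:ℝ) 1, |f x| ≤ c1 * CU := fun x hx => by
    simp only [hfdef]
    rw [abs_mul]
    exact mul_le_mul (hq1b x hx) (hCU' x hx) (abs_nonneg _) hc1.le
  have h11b : ∀ x ∈ Icc (0:ℝ) 1, |q1 x * P1 x| ≤ c1 * CP1 := fun x hx => by
    rw [abs_mul]
    exact mul_le_mul (hq1b x hx) (hCP1' x hx) (abs_nonneg _) hc1.le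
  have h22b : ∀ x ∈ Icc (0:ℝ) 1, |q2 x * P2 x| ≤ c1 * CP2 := fun x hx => by
    rw [abs_mul]
    exact mul_le_mul (hq2b x hx) (hCP2' x hx) (abs_nonneg _) hc1.le
  have hgb : ∀ x ∈ Icc (0:ℝ) 1, |g x| ≤ c1 * CP1 + c1 * CP2 := fun x hx => by
    simp only [hgdef]
    calc |q1 x * P1 x - q2 x * P2 x| ≤ |q1 x * P1 x| + |q2 x * P2 x| := abs_sub _ _
      _ ≤ c1 * CP1 + c1 * CP2 := add_le_add (h11b x hx) (h22b x hx)
  have h11m : Measurable (fun x => q1 x * P1 x) := hq1_meas.mul hP1c.measurable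
  have h22m : Measurable (fun x => q2 x * P2 x) := hq2_meas.mul hP2c.measurable
  -- integrability
  have hfi : IntegrableOn f (Icc (0:ℝ) 1) := integOn_mul' hq1_meas hq1b hUc.continuousOn
  have h11i : IntegrableOn (fun x => q1 x * P1 x) (Icc (0:ℝ) 1) :=
    integOn_mul' hq1_meas hq1b hP1c.continuousOn
  have h22i : IntegrableOn (fun x => q2 x * P2 x) (Icc (0:ℝ) 1) :=
    integOn_mul' hq2_meas hq2b hP2c.continuousOn
  have hgi : IntegrableOn g (Icc (0:ℝ) 1) := h11i.sub h22i
  have hsf_i : IntegrableOn (fun s => s * f s) (Icc (0:ℝ) 1) :=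
    integOn_cont_mul hfm hfb continuous_id.continuousOn
  have hsg_i : IntegrableOn (fun s => s * g s) (Icc (0:ℝ) 1) :=
    integOn_cont_mul hgm hgb continuous_id.continuousOn
  have iif : IntervalIntegrable f volume 0 1 := II_of_integOn hfi h0m h1m
  have iig : IntervalIntegrable g volume 0 1 := II_of_integOn hgi h0m h1m
  have iisg : IntervalIntegrable (fun s => s * g s) volume 0 1 := II_of_integOn hsg_i h0m h1m
  -- canonical equations
  have hUx : ∀ x ∈ Icc (0:ℝ) 1, U x = 1 + k ^ 2 * ∫ s in (0:ℝ)..x, (x - s) * f s := by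
    intro x hx
    rw [hUeq x hx, hu1 x hx]
    congr 1
    congr 1
    apply integral_congr
    intro s hs
    beta_reduce
    have hs' : s ∈ Icc (0:ℝ) 1 := hsub x hx hs
    simp only [hfdef]
    rw [hUeq s hs']
    ring
  have hP1x : ∀ x ∈ Icc (0:ℝ) 1,
      P1 x = P1 0 + k ^ 2 * ∫ s in (0:ℝ)..x, (x - s) * (q1 s * P1 s) := by
    intro x hx
    rw [hP1eq x hx, hψ1 x hx, ← hP1eq 0 h0m]
    congr 1
    congr 1
    apply integral_congr
    intro s hs
    beta_reduce
    have hs' : s ∈ Icc (0:ℝ) 1 := hsub x hx hs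
    rw [← hP1eq s hs']
    ring
  have hP2x : ∀ x ∈ Icc (0:ℝ) 1,
      P2 x = P2 0 + k ^ 2 * ∫ s in (0:ℝ)..x, (x - s) * (q2 s * P2 s) := by
    intro x hx
    rw [hP2eq x hx, hψ2 x hx, ← hP2eq 0 h0m]
    congr 1
    congr 1
    apply integral_congr
    intro s hs
    beta_reduce
    have hs' : s ∈ Icc (0:ℝ) 1 := hsub x hx hs
    rw [← hP2eq s hs']
    ring
  have hW : ∀ x ∈ Icc (0:ℝ) 1,
      P1 x - P2 x = (P1 0 - P2 0) + k ^ 2 * ∫ s in (0:ℝ)..x, (x - s) * g s := by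
    intro x hx
    have i1 : IntervalIntegrable (fun s => (x - s) * (q1 s * P1 s)) volume 0 x :=
      II_of_integOn (integOn_cont_mul h11m h11b
        ((continuous_const.sub continuous_id).continuousOn)) h0m hx
    have i2 : IntervalIntegrable (fun s => (x - s) * (q2 s * P2 s)) volume 0 x :=
      II_of_integOn (integOn_cont_mul h22m h22b
        ((continuous_const.sub continuous_id).continuousOn)) h0m hx
    have e3 : (∫ s in (0:ℝ)..x, (x - s) * g s)
        = (∫ s in (0:ℝ)..x, (x - s) * (q1 s * P1 s))
          - ∫ s in (0:ℝ)..x, (x - s) * (q2 s * P2 s) := by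
      rw [← integral_sub i1 i2]
      apply integral_congr
      intro s hs
      beta_reduce
      simp only [hgdef]
      ring
    rw [hP1x x hx, hP2x x hx, e3]
    ring
  -- Step A : ∫ g = 0
  have hG : (∫ x in (0:ℝ)..1, g x) = 0 := by
    have e1 : (∫ s in (0:ℝ)..1, q1 s * ψ1 s) = ∫ s in (0:ℝ)..1, q1 s * P1 s := by
      apply integral_congr
      intro s hs
      beta_reduce
      have hs' : s ∈ Icc (0:ℝ) 1 := hIcc_uIcc ▸ hs
      rw [hP1eq s hs']
    have e2 : (∫ s in (0:ℝ)..1, q2 s * ψ2 s) = ∫ s in (0:ℝ)..1, q2 s * P2 s := by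
      apply integral_congr
      intro s hs
      beta_reduce
      have hs' : s ∈ Icc (0:ℝ) 1 := hIcc_uIcc ▸ hs
      rw [hP2eq s hs']
    have e3 : (∫ s in (0:ℝ)..1, q1 s * P1 s) = ∫ s in (0:ℝ)..1, q2 s * P2 s := by
      have h := hderiv
      rw [e1, e2] at h
      exact mul_left_cancel₀ hk2 h
    have i11 : IntervalIntegrable (fun s => q1 s * P1 s) volume 0 1 :=
      II_of_integOn h11i h0m h1m
    have i22 : IntervalIntegrable (fun s => q2 s * P2 s) volume 0 1 :=
      II_of_integOn h22i h0m h1m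
    have : (∫ x in (0:ℝ)..1, g x)
        = (∫ s in (0:ℝ)..1, q1 s * P1 s) - ∫ s in (0:ℝ)..1, q2 s * P2 s := by
      rw [← integral_sub i11 i22]
    rw [this, e3, sub_self]
  -- Step B : w0 = k^2 * M
  have hval' : P1 1 = P2 1 := by rw [hP1eq 1 h1m, hP2eq 1 h1m]; exact hval
  have hIg1 : (∫ s in (0:ℝ)..1, (1 - s) * g s)
      = (∫ x in (0:ℝ)..1, g x) - ∫ x in (0:ℝ)..1, x * g x := by
    have e : (∫ s in (0:ℝ)..1, (1 - s) * g s) = ∫ s in (0:ℝ)..1, (g s - s * g s) := by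
      apply integral_congr
      intro s hs
      beta_reduce
      ring
    rw [e, integral_sub iig iisg]
  have hw0 : P1 0 - P2 0 = k ^ 2 * ∫ x in (0:ℝ)..1, x * g x := by
    have h1 := hW 1 h1m
    rw [hval', hIg1, hG, zero_sub, mul_neg] at h1
    linarith [h1]
  -- pointwise rewriting lemmas
  have hIf : ∀ x ∈ Icc (0:ℝ) 1, (∫ s in (0:ℝ)..x, (x - s) * f s)
      = x * (∫ s in (0:ℝ)..x, f s) - ∫ s in (0:ℝ)..x, s * f s := by
    intro x hx
    have j_f : IntervalIntegrable f volume 0 x := II_of_integOn hfi h0m hx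
    have j_sf : IntervalIntegrable (fun s => s * f s) volume 0 x := II_of_integOn hsf_i h0m hx
    have e : (∫ s in (0:ℝ)..x, (x - s) * f s) = ∫ s in (0:ℝ)..x, (x * f s - s * f s) := by
      apply integral_congr
      intro s hs
      beta_reduce
      ring
    rw [e, integral_sub (j_f.const_mul x) j_sf, intervalIntegral.integral_const_mul]
  have hsplitIg : ∀ x ∈ Icc (0:ℝ) 1, (∫ s in (0:ℝ)..x, (x - s) * g s)
      = (∫ s in x..1, (s - x) * g s) - ∫ s in (0:ℝ)..1, s * g s := by
    intro x hx
    have jk0x : IntervalIntegrable (fun s => (x - s) * g s) volume 0 x :=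
      II_of_integOn (integOn_cont_mul hgm hgb
        ((continuous_const.sub continuous_id).continuousOn)) h0m hx
    have jkx1 : IntervalIntegrable (fun s => (x - s) * g s) volume x 1 :=
      II_of_integOn (integOn_cont_mul hgm hgb
        ((continuous_const.sub continuous_id).continuousOn)) hx h1m
    have hadj := integral_add_adjacent_intervals jk0x jkx1
    have hfull : (∫ s in (0:ℝ)..1, (x - s) * g s)
        = x * (∫ s in (0:ℝ)..1, g s) - ∫ s in (0:ℝ)..1, s * g s := by
      have e : (∫ s in (0:ℝ)..1, (x - s) * g s) = ∫ s in (0:ℝ)..1, (x * g s - s * g s) := by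
        apply integral_congr
        intro s hs
        beta_reduce
        ring
      rw [e, integral_sub (iig.const_mul x) iisg, intervalIntegral.integral_const_mul]
    rw [hG, mul_zero, zero_sub] at hfull
    have hneg : (∫ s in x..1, (x - s) * g s) = -∫ s in x..1, (s - x) * g s := by
      rw [← intervalIntegral.integral_neg]
      apply integral_congr
      intro s hs
      beta_reduce
      ring
    linarith [hadj, hfull, hneg]
  -- continuity of the primitives
  have hBfc : ContinuousOn (fun x => ∫ s in (0:ℝ)..x, f s) (Icc (0:ℝ) 1) := by
    rw [hIcc_uIcc]
    exact continuousOn_primitive_interval (hIcc_uIcc ▸ hfi)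
  have hCfc : ContinuousOn (fun x => ∫ s in (0:ℝ)..x, s * f s) (Icc (0:ℝ) 1) := by
    rw [hIcc_uIcc]
    exact continuousOn_primitive_interval (hIcc_uIcc ▸ hsf_i)
  have hBgc : ContinuousOn (fun x => ∫ s in (0:ℝ)..x, g s) (Icc (0:ℝ) 1) := by
    rw [hIcc_uIcc]
    exact continuousOn_primitive_interval (hIcc_uIcc ▸ hgi)
  have hCgc : ContinuousOn (fun x => ∫ s in (0:ℝ)..x, s * g s) (Icc (0:ℝ) 1) := by
    rw [hIcc_uIcc]
    exact continuousOn_primitive_interval (hIcc_uIcc ▸ hsg_i)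
  have hJgc : ContinuousOn (fun x => ∫ s in x..1, (s - x) * g s) (Icc (0:ℝ) 1) := by
    have heq : ∀ x ∈ Icc (0:ℝ) 1, (∫ s in x..1, (s - x) * g s)
        = ((∫ s in (0:ℝ)..1, s * g s) - ∫ s in (0:ℝ)..x, s * g s)
          - x * ((∫ s in (0:ℝ)..1, g s) - ∫ s in (0:ℝ)..x, g s) := by
      intro x hx
      have jg0x : IntervalIntegrable g volume 0 x := II_of_integOn hgi h0m hx
      have jgx1 : IntervalIntegrable g volume x 1 := II_of_integOn hgi hx h1m
      have jsg0x : IntervalIntegrable (fun s => s * g s) volume 0 x :=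
        II_of_integOn hsg_i h0m hx
      have jsgx1 : IntervalIntegrable (fun s => s * g s) volume x 1 :=
        II_of_integOn hsg_i hx h1m
      have hadj2 := integral_add_adjacent_intervals jsg0x jsgx1
      have hadj3 := integral_add_adjacent_intervals jg0x jgx1
      have e : (∫ s in x..1, (s - x) * g s)
          = (∫ s in x..1, s * g s) - x * ∫ s in x..1, g s := by
        have e' : (∫ s in x..1, (s - x) * g s) = ∫ s in x..1, (s * g s - x * g s) := by
          apply integral_congr
          intro s hs
          beta_reduce
          ring
        rw [e', integral_sub jsgx1 (jgx1.const_mul x), intervalIntegral.integral_const_mul]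
      have e2 : (∫ s in x..1, s * g s)
          = (∫ s in (0:ℝ)..1, s * g s) - ∫ s in (0:ℝ)..x, s * g s := by linarith [hadj2]
      have e3 : (∫ s in x..1, g s) = (∫ s in (0:ℝ)..1, g s) - ∫ s in (0:ℝ)..x, g s := by
        linarith [hadj3]
      rw [e, e2, e3]
    refine ContinuousOn.congr ?_ fun x hx => heq x hx
    exact (continuousOn_const.sub hCgc).sub (continuousOn_id.mul (continuousOn_const.sub hBgc))
  have hvfc : ContinuousOn
      (fun x => x * (∫ s in (0:ℝ)..x, f s) - ∫ s in (0:ℝ)..x, s * f s) (Icc (0:ℝ) 1) :=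
    (continuousOn_id.mul hBfc).sub hCfc
  -- the swap identity
  have hswap : (∫ x in (0:ℝ)..1, f x * ∫ s in x..1, (s - x) * g s)
      = ∫ x in (0:ℝ)..1, g x * (x * (∫ s in (0:ℝ)..x, f s) - ∫ s in (0:ℝ)..x, s * f s) := by
    have e1 : (∫ x in (0:ℝ)..1, f x * ∫ s in x..1, (s - x) * g s)
        = ∫ x in (0:ℝ)..1, ∫ s in x..1, (s - x) * f x * g s := by
      apply integral_congr
      intro x hx
      beta_reduce
      rw [← intervalIntegral.integral_const_mul]
      apply integral_congr
      intro s hs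
      beta_reduce
      ring
    have e2 := triangle_swap hfm hgm hfi hgi
    have e3 : (∫ s in (0:ℝ)..1, ∫ x in (0:ℝ)..s, (s - x) * f x * g s)
        = ∫ x in (0:ℝ)..1, g x * (x * (∫ s in (0:ℝ)..x, f s) - ∫ s in (0:ℝ)..x, s * f s) := by
      apply integral_congr
      intro y hy
      beta_reduce
      have hy' : y ∈ Icc (0:ℝ) 1 := hIcc_uIcc ▸ hy
      rw [intervalIntegral.integral_mul_const, hIf y hy']
      ring
    rw [e1, e2, e3]
  -- interval integrabilities of all the pieces
  have iiT1 : IntervalIntegrable (fun x => (P1 0 - P2 0) * f x) volume 0 1 := iif.const_mul _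
  have iiT4 : IntervalIntegrable
      (fun x => k ^ 2 * (f x * ∫ s in x..1, (s - x) * g s)) volume 0 1 :=
    (II_of_integOn (integOn_mul' hfm hfb hJgc) h0m h1m).const_mul _
  have iiT3 : IntervalIntegrable
      (fun x => k ^ 2 * ((∫ s in (0:ℝ)..1, s * g s) * f x)) volume 0 1 :=
    (iif.const_mul _).const_mul _
  have iiT5 : IntervalIntegrable
      (fun x => k ^ 2 * (g x * (x * (∫ s in (0:ℝ)..x, f s) - ∫ s in (0:ℝ)..x, s * f s)))
      volume 0 1 :=
    (II_of_integOn (integOn_mul' hgm hgb hvfc) h0m h1m).const_mul _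
  -- main pointwise identity
  have main : (∫ x in (0:ℝ)..1, (q2 x - q1 x) * u1 x * ψ2 x)
      = ∫ x in (0:ℝ)..1,
          ((P1 0 - P2 0) * f x - g x
            + k ^ 2 * (f x * ∫ s in x..1, (s - x) * g s)
            - k ^ 2 * ((∫ s in (0:ℝ)..1, s * g s) * f x)
            - k ^ 2 * (g x * (x * (∫ s in (0:ℝ)..x, f s) - ∫ s in (0:ℝ)..x, s * f s))) := by
    apply integral_congr
    intro x hx
    beta_reduce
    have hx' : x ∈ Icc (0:ℝ) 1 := hIcc_uIcc ▸ hx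
    have hlhs : (q2 x - q1 x) * u1 x * ψ2 x = f x * (P1 x - P2 x) - g x * U x := by
      simp only [hfdef, hgdef]
      rw [hUeq x hx', hP1eq x hx', hP2eq x hx']
      ring
    rw [hlhs, hW x hx', hsplitIg x hx', hUx x hx', hIf x hx']
    ring
  rw [main,
    integral_sub (((iiT1.sub iig).add iiT4).sub iiT3) iiT5,
    integral_sub ((iiT1.sub iig).add iiT4) iiT3,
    integral_add (iiT1.sub iig) iiT4,
    integral_sub iiT1 iig]
  have E1 : (∫ x in (0:ℝ)..1, (P1 0 - P2 0) * f x)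
      = (P1 0 - P2 0) * ∫ x in (0:ℝ)..1, f x := integral_const_mul _ _
  have E4 : (∫ x in (0:ℝ)..1, k ^ 2 * (f x * ∫ s in x..1, (s - x) * g s))
      = k ^ 2 * ∫ x in (0:ℝ)..1, f x * ∫ s in x..1, (s - x) * g s := integral_const_mul _ _
  have E3 : (∫ x in (0:ℝ)..1, k ^ 2 * ((∫ s in (0:ℝ)..1, s * g s) * f x))
      = k ^ 2 * ((∫ s in (0:ℝ)..1, s * g s) * ∫ x in (0:ℝ)..1, f x) := by
    rw [intervalIntegral.integral_const_mul, intervalIntegral.integral_const_mul]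
  have E5 : (∫ x in (0:ℝ)..1,
        k ^ 2 * (g x * (x * (∫ s in (0:ℝ)..x, f s) - ∫ s in (0:ℝ)..x, s * f s)))
      = k ^ 2 * ∫ x in (0:ℝ)..1,
          g x * (x * (∫ s in (0:ℝ)..x, f s) - ∫ s in (0:ℝ)..x, s * f s) :=
    integral_const_mul _ _
  rw [E1, E4, E3, E5, hG, hswap, hw0]
  ring
end
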